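/- arXiv:1704.05286 — 6 statements merged into one kernel-verified Lean document; each statement's English description precedes it below -/
import Mathlib

section
/- Let K ⊆ V(G) be a cliquish vertex set and let S be a proper subset of K. Then crib(S, K) is a full component associated with S. -/
namespace TW

variable {V : Type} [Finite V]

/-- The open neighborhood of a vertex set `U`: vertices outside `U`
adjacent to some vertex of `U`. -/
def nbhd (G : SimpleGraph V) (U : Set V) : Set V :=
  {v | v ∉ U ∧ ∃ u ∈ U, G.Adj u v}

/-- The closed neighborhood `N[U] = U ∪ N(U)`. -/
def nbhdClosed (G : SimpleGraph V) (U : Set V) : Set V :=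
  U ∪ nbhd G U

/-- A set `C` is connected in `G` if the induced subgraph `G[C]` is connected. -/
def SetConnected (G : SimpleGraph V) (C : Set V) : Prop :=
  (G.induce C).Connected

/-- `C` is a component associated with `S`: a connected component of the
subgraph of `G` induced by the complement of `S`. -/
def IsCompAssoc (G : SimpleGraph V) (S C : Set V) : Prop :=
  SetConnected G C ∧ Disjoint C S ∧ nbhd G C ⊆ S

/-- `C` is a full component associated with `S`. -/
def IsFullComp (G : SimpleGraph V) (S C : Set V) : Prop :=
  IsCompAssoc G S C ∧ nbhd G C = S

/-- `S` is a minimal separator: at least two full components are associated with `S`. -/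
def MinimalSeparator (G : SimpleGraph V) (S : Set V) : Prop :=
  ∃ C D : Set V, IsFullComp G S C ∧ IsFullComp G S D ∧ C ≠ D

/-- The number of connected components of the subgraph induced by the complement of `S`. -/
noncomputable def numComponents (G : SimpleGraph V) (S : Set V) : ℕ :=
  Nat.card (G.induce (Sᶜ : Set V)).ConnectedComponent

/-- `S` is a separator of `G`: removing `S` increases the number of connected
components of `G`. -/
def Separator (G : SimpleGraph V) (S : Set V) : Prop :=
  numComponents G (∅ : Set V) < numComponents G S

/-- `S` is cliquish: every two distinct vertices of `S` are adjacent or lie in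
the neighborhood of a common component associated with `S`. -/
def Cliquish (G : SimpleGraph V) (S : Set V) : Prop :=
  ∀ u ∈ S, ∀ v ∈ S, u ≠ v →
    G.Adj u v ∨ ∃ C, IsCompAssoc G S C ∧ u ∈ nbhd G C ∧ v ∈ nbhd G C

/-- A graph is chordal if every induced cycle has length exactly three. -/
def IsChordal {W : Type} (H : SimpleGraph W) : Prop :=
  ∀ ⦃v : W⦄ (w : H.Walk v v), w.IsCycle →
    (∀ x ∈ w.support, ∀ y ∈ w.support, H.Adj x y → s(x, y) ∈ w.edges) →
    w.length = 3

/-- `H` is a minimal chordal completion of `G`. -/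
def MinChordalCompletion {W : Type} (G H : SimpleGraph W) : Prop :=
  G ≤ H ∧ IsChordal H ∧ ∀ H' : SimpleGraph W, G ≤ H' → H' ≤ H → IsChordal H' → H' = H

/-- `Ω` is a potential maximal clique of `G`: a clique in some minimal chordal
completion of `G`. -/
def PMC {W : Type} (G : SimpleGraph W) (Ω : Set W) : Prop :=
  ∃ H : SimpleGraph W, MinChordalCompletion G H ∧ H.IsClique Ω

/-- A tree-decomposition of `G`. -/
structure TreeDecomp {W : Type} (G : SimpleGraph W) where
  ι : Type
  tree : SimpleGraph ι
  isTree : tree.IsTree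
  bag : ι → Set W
  bag_cover : ∀ v : W, ∃ i, v ∈ bag i
  bag_edge : ∀ ⦃u v : W⦄, G.Adj u v → ∃ i, u ∈ bag i ∧ v ∈ bag i
  bag_conn : ∀ v : W, (tree.induce {i | v ∈ bag i}).Connected

/-- The width of a tree-decomposition: maximum bag size minus one. -/
noncomputable def TreeDecomp.width {W : Type} {G : SimpleGraph W} (td : TreeDecomp G) : ℕ :=
  (⨆ i, (td.bag i).ncard) - 1

/-- The treewidth of `G`: the minimum width over all tree-decompositions. -/
noncomputable def treewidth {W : Type} (G : SimpleGraph W) : ℕ :=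
  ⨅ td : TreeDecomp G, td.width

/-- The graph on `V` whose edges are all pairs of distinct vertices of `S`. -/
def cliqueOn {W : Type} (S : Set W) : SimpleGraph W where
  Adj u v := u ≠ v ∧ u ∈ S ∧ v ∈ S
  symm := ⟨fun u v ⟨h, hu, hv⟩ => ⟨h.symm, hv, hu⟩⟩
  loopless := ⟨fun u ⟨h, _, _⟩ => h rfl⟩

/-- `G⟨C⟩`: the graph on `N[C]` obtained from `G[N[C]]` by completing `N(C)` into a clique. -/
def gAngle (G : SimpleGraph V) (C : Set V) : SimpleGraph ↥(nbhdClosed G C) :=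
  (G ⊔ cliqueOn (nbhd G C)).induce (nbhdClosed G C)

/-- A connected set `C` is feasible if `tw(G⟨C⟩) ≤ k`. -/
def Feasible (G : SimpleGraph V) (k : ℕ) (C : Set V) : Prop :=
  treewidth (gAngle G C) ≤ k

/-- `crib S K`: the union of `K \ S` and all components associated with `K`
that are unconfined to `S` (i.e. whose neighborhood is not contained in `S`). -/
def crib (G : SimpleGraph V) (S K : Set V) : Set V :=
  (K \ S) ∪ ⋃ C ∈ {C : Set V | IsCompAssoc G K C ∧ ¬ nbhd G C ⊆ S}, C

section Order

variable [LinearOrder V]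

/-- The minimum element of a nonempty subset of a finite linear order. -/
noncomputable def setMin (U : Set V) (hU : U.Nonempty) : V :=
  wellFounded_lt.min U hU

/-- `U ≺ W`: `min U < min W` (for nonempty sets `U`, `W`). -/
def SetPrec (U W : Set V) : Prop :=
  ∃ (hU : U.Nonempty) (hW : W.Nonempty), setMin U hU < setMin W hW

/-- A connected set `C` is inbound if some full component `A` associated with
`N(C)` satisfies `A ≺ C`. -/
def Inbound (G : SimpleGraph V) (C : Set V) : Prop :=
  SetConnected G C ∧ ∃ A, IsFullComp G (nbhd G C) A ∧ SetPrec A C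

/-- A connected set is outbound if it is not inbound. -/
def Outbound (G : SimpleGraph V) (C : Set V) : Prop :=
  SetConnected G C ∧ ¬ ∃ A, IsFullComp G (nbhd G C) A ∧ SetPrec A C

open Classical in
/-- The outlet of `K`: `∅` if no non-full outbound component is associated with `K`;
otherwise `N(A)` for a non-full outbound component `A` associated with `K`
with `N(A)` maximal. -/
noncomputable def outlet (G : SimpleGraph V) (K : Set V) : Set V :=
  if h : ∃ A, IsCompAssoc G K A ∧ nbhd G A ≠ K ∧ Outbound G A ∧
      ∀ A', IsCompAssoc G K A' → nbhd G A' ≠ K → Outbound G A' →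
        ¬ nbhd G A ⊂ nbhd G A'
  then nbhd G h.choose
  else ∅

/-- `support K`: the components associated with `K` that are unconfined to `outlet K`. -/
def support (G : SimpleGraph V) (K : Set V) : Set (Set V) :=
  {C | IsCompAssoc G K C ∧ ¬ nbhd G C ⊆ outlet G K}

/-- An O-block `(N(A), A)` (with `A` outbound and `|N(A)| ≤ k`) is feasible if
`N(A) = ⋃_{C ∈ 𝒞} N(C)` for some set `𝒞` of feasible inbound connected sets. -/
def FeasibleOBlock (G : SimpleGraph V) (k : ℕ) (A : Set V) : Prop :=
  Outbound G A ∧ (nbhd G A).ncard ≤ k ∧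
    ∃ 𝒞 : Set (Set V), (∀ C ∈ 𝒞, Inbound G C ∧ Feasible G k C) ∧
      nbhd G A = ⋃ C ∈ 𝒞, nbhd G C

/-- A potential maximal clique `Ω` is buildable. -/
def Buildable (G : SimpleGraph V) (k : ℕ) (Ω : Set V) : Prop :=
  Ω.ncard ≤ k + 1 ∧
    ((∃ v : V, Ω = nbhdClosed G {v}) ∨
     (∃ 𝒞 ⊆ support G Ω, (∀ C ∈ 𝒞, Feasible G k C) ∧ Ω = ⋃ C ∈ 𝒞, nbhd G C) ∨
     (∃ A, FeasibleOBlock G k A ∧ ∃ v ∈ nbhd G A, Ω = nbhd G A ∪ (G.neighborSet v ∩ A)))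

end Order


open SimpleGraph in
private lemma reach_induce_of_walk {V : Type} {G : SimpleGraph V} {A : Set V} {u v : V}
    (w : G.Walk u v) (hw : ∀ x ∈ w.support, x ∈ A)
    (hu : u ∈ A) (hv : v ∈ A) :
    (G.induce A).Reachable ⟨u, hu⟩ ⟨v, hv⟩ := by
  induction w with
  | nil => exact Reachable.refl _
  | @cons a b c h p ih =>
      have hb : b ∈ A := hw b (by simp)
      have h1 : (G.induce A).Adj ⟨a, hu⟩ ⟨b, hb⟩ := by
        simpa [SimpleGraph.comap_adj] using h
      exact h1.reachable.trans (ih (fun x hx => hw x (by simp [hx])) hb hv)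

open SimpleGraph in
private lemma reach_induce_mono {V : Type} {G : SimpleGraph V} {A B : Set V} (hAB : A ⊆ B)
    {u v : V} (hu : u ∈ A) (hv : v ∈ A)
    (h : (G.induce A).Reachable ⟨u, hu⟩ ⟨v, hv⟩) :
    (G.induce B).Reachable ⟨u, hAB hu⟩ ⟨v, hAB hv⟩ :=
    h.map (G.induceHomOfLE hAB).toHom

open SimpleGraph in
private lemma exists_comp_assoc {V : Type} [Finite V] {G : SimpleGraph V} {K : Set V} {v : V}
    (hv : v ∉ K) : ∃ C, IsCompAssoc G K C ∧ v ∈ C := by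
  classical
  set H : SimpleGraph (Kᶜ : Set V) := G.induce (Kᶜ : Set V) with hH
  set C : Set V := Subtype.val '' ((H.connectedComponentMk ⟨v, hv⟩).supp) with hC
  have memC : ∀ x : (Kᶜ : Set V), (x : V) ∈ C ↔
      H.Reachable x ⟨v, hv⟩ := by
    intro x
    constructor
    · rintro ⟨y, hy, hyx⟩
      rw [ConnectedComponent.mem_supp_iff] at hy
      have : y = x := Subtype.ext hyx
      subst this
      exact ConnectedComponent.exact hy
    · intro hr
      exact ⟨x, by rw [ConnectedComponent.mem_supp_iff]; exact ConnectedComponent.sound hr, rfl⟩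
  have hvC : v ∈ C := (memC ⟨v, hv⟩).2 (Reachable.refl _)
  have hdisj : Disjoint C K := by
    rw [Set.disjoint_left]
    rintro x ⟨y, _, rfl⟩
    exact y.2
  refine ⟨C, ⟨?_, hdisj, ?_⟩, hvC⟩
  · -- SetConnected
    rw [SetConnected, SimpleGraph.connected_iff]
    constructor
    · rintro ⟨a, ha⟩ ⟨b, hb⟩
      obtain ⟨a', ha', rfl⟩ := ha
      obtain ⟨b', hb', rfl⟩ := hb
      have hra : H.Reachable a' ⟨v, hv⟩ := (memC a').1 ⟨a', ha', rfl⟩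
      have hrb : H.Reachable b' ⟨v, hv⟩ := (memC b').1 ⟨b', hb', rfl⟩
      obtain ⟨w⟩ := hra.trans hrb.symm
      have w' : G.Walk (a' : V) (b' : V) := w.map (SimpleGraph.Embedding.induce _).toHom
      have hsupp : ∀ x ∈ (w.map (SimpleGraph.Embedding.induce _).toHom).support, x ∈ C := by
        intro x hx
        rw [SimpleGraph.Walk.support_map, List.mem_map] at hx
        obtain ⟨y, hy, hyx⟩ := hx
        have : H.Reachable a' y := (w.takeUntil y hy).reachable
        have : H.Reachable y ⟨v, hv⟩ := this.symm.trans hra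
        have := (memC y).2 this
        exact hyx ▸ this
      have := reach_induce_of_walk (w.map (SimpleGraph.Embedding.induce _).toHom) hsupp
        ⟨a', ha', rfl⟩ ⟨b', hb', rfl⟩
      exact this
    · exact ⟨⟨v, hvC⟩⟩
  · -- nbhd C ⊆ K
    rintro x ⟨hxC, u, huC, hadj⟩
    by_contra hxK
    obtain ⟨u', hu', rfl⟩ := huC
    have hadj' : H.Adj u' ⟨x, hxK⟩ := by simpa [hH, SimpleGraph.comap_adj] using hadj
    have : H.Reachable (⟨x, hxK⟩ : (Kᶜ : Set V)) ⟨v, hv⟩ :=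
      hadj'.symm.reachable.trans ((memC u').1 ⟨u', hu', rfl⟩)
    exact hxC ((memC ⟨x, hxK⟩).2 this)

private lemma mem_crib {V : Type} [Finite V] {G : SimpleGraph V} {S K : Set V} {x : V} :
    x ∈ crib G S K ↔ (x ∈ K ∧ x ∉ S) ∨
      ∃ C, (IsCompAssoc G K C ∧ ¬ nbhd G C ⊆ S) ∧ x ∈ C := by
  simp [crib, Set.mem_diff]

/-- If `K` is cliquish and `S` is a proper subset of `K`, then `crib S K` is a full
component associated with `S`. -/
theorem crib_full_component {V : Type} [Finite V] (G : SimpleGraph V) (K S : Set V)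
    (hK : Cliquish G K) (hS : S ⊂ K) :
    IsFullComp G S (crib G S K) := by
  classical
  obtain ⟨t, htK, htS⟩ := Set.exists_of_ssubset hS
  have mem_nbhd : ∀ (U : Set V) (x : V), x ∈ nbhd G U ↔ x ∉ U ∧ ∃ u ∈ U, G.Adj u x :=
    fun U x => Iff.rfl
  set R := crib G S K with hR
  have htR : t ∈ R := mem_crib.2 (Or.inl ⟨htK, htS⟩)
  have hdisj : Disjoint R S := by
    rw [Set.disjoint_left]
    intro x hx hxS
    rcases mem_crib.1 hx with ⟨_, h⟩ | ⟨C, ⟨hC, _⟩, hxC⟩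
    · exact h hxS
    · exact (Set.disjoint_left.1 hC.2.1 hxC) (hS.1 hxS)
  have hsubR : ∀ {C : Set V}, IsCompAssoc G K C → ¬ nbhd G C ⊆ S → C ⊆ R :=
    fun hC hns x hx => mem_crib.2 (Or.inr ⟨_, ⟨hC, hns⟩, hx⟩)
  have hnbhd_sub : nbhd G R ⊆ S := by
    intro x hx
    obtain ⟨hxR, u, huR, hadj⟩ := (mem_nbhd R x).1 hx
    rcases mem_crib.1 huR with ⟨huK, huS⟩ | ⟨C, ⟨hC, hCn⟩, huC⟩
    · by_cases hxK : x ∈ K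
      · by_contra hxS
        exact hxR (mem_crib.2 (Or.inl ⟨hxK, hxS⟩))
      · obtain ⟨C, hC, hxC⟩ := exists_comp_assoc (G := G) hxK
        have huN : u ∈ nbhd G C :=
          (mem_nbhd C u).2 ⟨Set.disjoint_right.1 hC.2.1 huK, x, hxC, hadj.symm⟩
        have hCn : ¬ nbhd G C ⊆ S := fun h => huS (h huN)
        exact absurd (hsubR hC hCn hxC) hxR
    · by_cases hxC : x ∈ C
      · exact absurd (hsubR hC hCn hxC) hxR
      · have hxN : x ∈ nbhd G C := (mem_nbhd C x).2 ⟨hxC, u, huC, hadj⟩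
        have hxK := hC.2.2 hxN
        by_contra hxS
        exact hxR (mem_crib.2 (Or.inl ⟨hxK, hxS⟩))
  have hnbhd : nbhd G R = S := by
    refine Set.Subset.antisymm hnbhd_sub fun s hsS => ?_
    have hsR : s ∉ R := Set.disjoint_right.1 hdisj hsS
    have hst : s ≠ t := fun h => htS (h ▸ hsS)
    rcases hK s (hS.1 hsS) t htK hst with hadj | ⟨C, hC, hsN, htN⟩
    · exact (mem_nbhd R s).2 ⟨hsR, t, htR, hadj.symm⟩
    · have hCn : ¬ nbhd G C ⊆ S := fun h => htS (h htN)
      obtain ⟨-, c, hcC, hcs⟩ := (mem_nbhd C s).1 hsN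
      exact (mem_nbhd R s).2 ⟨hsR, c, hsubR hC hCn hcC, hcs⟩
  have hKS : ∀ y (hy : y ∈ K) (hyS : y ∉ S) z (hz : z ∈ K) (hzS : z ∉ S),
      (G.induce R).Reachable ⟨y, mem_crib.2 (Or.inl ⟨hy, hyS⟩)⟩
        ⟨z, mem_crib.2 (Or.inl ⟨hz, hzS⟩)⟩ := by
    intro y hy hyS z hz hzS
    by_cases hyz : y = z
    · subst hyz; exact SimpleGraph.Reachable.refl _
    rcases hK y hy z hz hyz with hadj | ⟨C, hC, hyN, hzN⟩
    · exact SimpleGraph.Adj.reachable (by simpa [SimpleGraph.comap_adj] using hadj)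
    · have hCn : ¬ nbhd G C ⊆ S := fun h => hyS (h hyN)
      have hCR : C ⊆ R := hsubR hC hCn
      obtain ⟨-, c, hcC, hcy⟩ := (mem_nbhd C y).1 hyN
      obtain ⟨-, d, hdC, hdz⟩ := (mem_nbhd C z).1 hzN
      have h1 : (G.induce R).Reachable ⟨y, mem_crib.2 (Or.inl ⟨hy, hyS⟩)⟩ ⟨c, hCR hcC⟩ :=
        SimpleGraph.Adj.reachable (by simpa [SimpleGraph.comap_adj] using hcy.symm)
      have h2 : (G.induce C).Reachable ⟨c, hcC⟩ ⟨d, hdC⟩ :=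
        SimpleGraph.Connected.preconnected hC.1 _ _
      have h2' := reach_induce_mono hCR hcC hdC h2
      have h3 : (G.induce R).Reachable ⟨d, hCR hdC⟩ ⟨z, mem_crib.2 (Or.inl ⟨hz, hzS⟩)⟩ :=
        SimpleGraph.Adj.reachable (by simpa [SimpleGraph.comap_adj] using hdz)
      exact h1.trans (h2'.trans h3)
  have key : ∀ x (hx : x ∈ R), (G.induce R).Reachable ⟨x, hx⟩ ⟨t, htR⟩ := by
    intro x hx
    rcases mem_crib.1 hx with ⟨hxK, hxS⟩ | ⟨C, ⟨hC, hCn⟩, hxC⟩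
    · exact hKS x hxK hxS t htK htS
    · obtain ⟨w, hwN, hwS⟩ := Set.not_subset.1 hCn
      have hwK : w ∈ K := hC.2.2 hwN
      have hwR : w ∈ R := mem_crib.2 (Or.inl ⟨hwK, hwS⟩)
      obtain ⟨-, c, hcC, hcw⟩ := (mem_nbhd C w).1 hwN
      have hCR : C ⊆ R := hsubR hC hCn
      have h1 : (G.induce C).Reachable ⟨x, hxC⟩ ⟨c, hcC⟩ :=
        SimpleGraph.Connected.preconnected hC.1 _ _
      have h1' := reach_induce_mono hCR hxC hcC h1
      have h2 : (G.induce R).Reachable ⟨c, hCR hcC⟩ ⟨w, hwR⟩ :=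
        SimpleGraph.Adj.reachable (by simpa [SimpleGraph.comap_adj] using hcw)
      exact (h1'.trans h2).trans (hKS w hwK hwS t htK htS)
  refine ⟨⟨?_, hdisj, hnbhd_sub⟩, hnbhd⟩
  rw [SetConnected, SimpleGraph.connected_iff]
  exact ⟨fun a b => (key a.1 a.2).trans (key b.1 b.2).symm, ⟨⟨t, htR⟩⟩⟩

end TW
end

section
/- Let K ⊆ V(G) be a cliquish vertex set and let S be a proper subset of K. Then crib(S, K) is the unique component associated with S that intersects K. -/
namespace TW

variable {V : Type} [Finite V]

section CribHelpers

variable {G : SimpleGraph V} {S K C D : Set V}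

lemma mem_of_adj_compAssoc (h : IsCompAssoc G S C) {z z' : V} (hz : z ∈ C)
    (hadj : G.Adj z z') (hz' : z' ∉ S) : z' ∈ C := by
  by_contra hzc
  exact hz' (h.2.2 ⟨hzc, z, hz, hadj⟩)

lemma mem_of_walk_compAssoc (h : IsCompAssoc G S C) {x y : V} (w : G.Walk x y) :
    x ∈ C → (∀ v ∈ w.support, v ∉ S) → y ∈ C := by
  induction w with
  | nil => exact fun hx _ => hx
  | cons hadj p ih =>
      intro hx hw
      exact ih (mem_of_adj_compAssoc h hx hadj (hw _ (by simp)))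
        (fun v hv => hw v (by simp [hv]))

lemma reachable_induce_of_walk {T : Set V} {a b : V} (w : G.Walk a b)
    (hT : ∀ v ∈ w.support, v ∈ T) :
    ∀ (ha : a ∈ T) (hb : b ∈ T), (G.induce T).Reachable ⟨a, ha⟩ ⟨b, hb⟩ := by
  induction w with
  | nil => exact fun _ _ => SimpleGraph.Reachable.refl _
  | @cons a c b hadj p ih =>
      intro ha hb
      have hc : c ∈ T := hT c (by simp)
      have hadjT' : (G.induce T).Adj ⟨a, ha⟩ ⟨c, hc⟩ := hadj
      exact (SimpleGraph.Adj.reachable hadjT').trans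
        (ih (fun v hv => hT v (by simp [hv])) hc hb)

lemma reachable_induce_mono {D T : Set V} (hDT : D ⊆ T) {a b : V} {ha : a ∈ D} {hb : b ∈ D}
    (h : (G.induce D).Reachable ⟨a, ha⟩ ⟨b, hb⟩) :
    (G.induce T).Reachable ⟨a, hDT ha⟩ ⟨b, hDT hb⟩ := by
  obtain ⟨p⟩ := h
  refine reachable_induce_of_walk (p.map (SimpleGraph.Embedding.induce D).toHom) ?_ _ _
  intro v hv
  rw [SimpleGraph.Walk.support_map] at hv
  obtain ⟨⟨u, hu⟩, _, rfl⟩ := List.mem_map.mp hv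
  exact hDT hu

lemma compAssoc_subset (hC : IsCompAssoc G S C) (hD : IsCompAssoc G S D)
    {x : V} (hxC : x ∈ C) (hxD : x ∈ D) : D ⊆ C := by
  intro y hy
  obtain ⟨p⟩ := hD.1.preconnected ⟨x, hxD⟩ ⟨y, hy⟩
  refine mem_of_walk_compAssoc hC (p.map (SimpleGraph.Embedding.induce D).toHom) hxC ?_
  intro v hv
  replace hv : v ∈ (p.map (SimpleGraph.Embedding.induce D).toHom).support := hv
  rw [SimpleGraph.Walk.support_map] at hv
  obtain ⟨⟨u, hu⟩, _, rfl⟩ := List.mem_map.mp hv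
  exact Set.disjoint_left.mp hD.2.1 hu

lemma exists_compAssoc_mem (G : SimpleGraph V) (K : Set V) {v : V} (hv : v ∉ K) :
    ∃ D, IsCompAssoc G K D ∧ v ∈ D := by
  classical
  set D : Set V :=
    {y | ∃ hy : y ∈ (Kᶜ : Set V), (G.induce (Kᶜ : Set V)).Reachable ⟨v, hv⟩ ⟨y, hy⟩} with hDdef
  have hvD : v ∈ D := ⟨hv, SimpleGraph.Reachable.refl _⟩
  refine ⟨D, ⟨?_, ?_, ?_⟩, hvD⟩
  · rw [SetConnected, SimpleGraph.connected_iff]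
    refine ⟨?_, ⟨⟨v, hvD⟩⟩⟩
    rintro ⟨a, haD⟩ ⟨b, hbD⟩
    obtain ⟨p⟩ := haD.2.symm.trans hbD.2
    refine reachable_induce_of_walk (p.map (SimpleGraph.Embedding.induce (Kᶜ : Set V)).toHom) ?_ _ _
    intro u hu
    rw [SimpleGraph.Walk.support_map] at hu
    obtain ⟨⟨u, hu'⟩, humem, rfl⟩ := List.mem_map.mp hu
    have : (G.induce (Kᶜ : Set V)).Reachable ⟨a, haD.1⟩ ⟨u, hu'⟩ := ⟨p.takeUntil _ humem⟩
    exact ⟨hu', haD.2.trans this⟩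
  · rw [Set.disjoint_left]
    rintro y ⟨hy, -⟩
    exact hy
  · rintro z ⟨hzD, y, hyD, hadj⟩
    by_contra hzK
    have hadj' : (G.induce (Kᶜ : Set V)).Adj ⟨y, hyD.1⟩ ⟨z, hzK⟩ := hadj
    exact hzD ⟨hzK, hyD.2.trans (SimpleGraph.Adj.reachable hadj')⟩

end CribHelpers

/-- If `K` is cliquish and `S` is a proper subset of `K`, then `crib S K` is the unique
component associated with `S` that intersects `K`. -/
theorem crib_unique_component {V : Type} [Finite V] (G : SimpleGraph V) (K S : Set V)
    (hK : Cliquish G K) (hS : S ⊂ K) :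
    IsCompAssoc G S (crib G S K) ∧ (crib G S K ∩ K).Nonempty ∧
      ∀ C : Set V, IsCompAssoc G S C → (C ∩ K).Nonempty → C = crib G S K := by
  classical
  obtain ⟨k0, hk0K, hk0S⟩ := Set.exists_of_ssubset hS
  have hKS_sub : K \ S ⊆ crib G S K := Set.subset_union_left
  have hcomp_sub : ∀ C, IsCompAssoc G K C → ¬ nbhd G C ⊆ S → C ⊆ crib G S K := by
    intro C h1 h2
    exact Set.subset_union_of_subset_right
      (Set.subset_biUnion_of_mem (u := fun C => C) (show C ∈ {C : Set V | IsCompAssoc G K C ∧ ¬ nbhd G C ⊆ S} from ⟨h1, h2⟩)) _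
  have hmem_elim : ∀ x ∈ crib G S K,
      x ∈ K \ S ∨ ∃ C, (IsCompAssoc G K C ∧ ¬ nbhd G C ⊆ S) ∧ x ∈ C := by
    intro x hx
    simp only [crib, Set.mem_union, Set.mem_iUnion, Set.mem_setOf_eq, exists_prop] at hx
    tauto
  -- disjointness from S
  have hdisj : Disjoint (crib G S K) S := by
    rw [Set.disjoint_left]
    intro x hx hxS
    rcases hmem_elim x hx with ⟨-, h⟩ | ⟨C, ⟨hC, -⟩, hxC⟩
    · exact h hxS
    · exact Set.disjoint_left.mp hC.2.1 hxC (hS.1 hxS)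
  -- neighborhood contained in S
  have hnbhd : nbhd G (crib G S K) ⊆ S := by
    rintro z ⟨hzc, u, hu, hadj⟩
    by_contra hzS
    apply hzc
    by_cases hzK : z ∈ K
    · exact hKS_sub ⟨hzK, hzS⟩
    · rcases hmem_elim u hu with ⟨huK, huS⟩ | ⟨C, ⟨hC, hCS⟩, huC⟩
      · obtain ⟨D, hD, hzD⟩ := exists_compAssoc_mem G K hzK
        have huD : u ∉ D := Set.disjoint_right.mp hD.2.1 huK
        have hunb : u ∈ nbhd G D := ⟨huD, z, hzD, hadj.symm⟩
        exact hcomp_sub D hD (fun hsub => huS (hsub hunb)) hzD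
      · exact hcomp_sub C hC hCS (mem_of_adj_compAssoc hC huC hadj hzK)
  have hk0crib : k0 ∈ crib G S K := hKS_sub ⟨hk0K, hk0S⟩
  -- reach a base vertex of K \ S from any vertex of the crib
  have reach_base : ∀ x (hx : x ∈ crib G S K), ∃ u, ∃ hu : u ∈ K \ S,
      (G.induce (crib G S K)).Reachable ⟨x, hx⟩ ⟨u, hKS_sub hu⟩ := by
    intro x hx
    rcases hmem_elim x hx with hxKS | ⟨C, ⟨hC, hCS⟩, hxC⟩
    · exact ⟨x, hxKS, SimpleGraph.Reachable.refl _⟩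
    · obtain ⟨u, hunb, huS⟩ := Set.not_subset.mp hCS
      have huK : u ∈ K := hC.2.2 hunb
      obtain ⟨huC, c, hcC, hcu⟩ := hunb
      have hCcrib : C ⊆ crib G S K := hcomp_sub C hC hCS
      have h1 : (G.induce (crib G S K)).Reachable ⟨x, hx⟩ ⟨c, hCcrib hcC⟩ :=
        reachable_induce_mono hCcrib (hC.1.preconnected ⟨x, hxC⟩ ⟨c, hcC⟩)
      have h2 : (G.induce (crib G S K)).Adj ⟨c, hCcrib hcC⟩ ⟨u, hKS_sub ⟨huK, huS⟩⟩ := hcu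
      exact ⟨u, ⟨huK, huS⟩, h1.trans (SimpleGraph.Adj.reachable h2)⟩
  -- any two base vertices are connected in the crib
  have base_reach : ∀ u v (hu : u ∈ K \ S) (hv : v ∈ K \ S),
      (G.induce (crib G S K)).Reachable ⟨u, hKS_sub hu⟩ ⟨v, hKS_sub hv⟩ := by
    intro u v hu hv
    by_cases huv : u = v
    · subst huv; exact SimpleGraph.Reachable.refl _
    rcases hK u hu.1 v hv.1 huv with hadj |
      ⟨C, hC, ⟨huC, c, hcC, hcu⟩, ⟨hvC, c', hc'C, hc'v⟩⟩
    · exact SimpleGraph.Adj.reachable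
        (show (G.induce (crib G S K)).Adj ⟨u, hKS_sub hu⟩ ⟨v, hKS_sub hv⟩ from hadj)
    · have hCS : ¬ nbhd G C ⊆ S := fun hsub => hu.2 (hsub ⟨huC, c, hcC, hcu⟩)
      have hCcrib : C ⊆ crib G S K := hcomp_sub C hC hCS
      have e1 : (G.induce (crib G S K)).Adj ⟨u, hKS_sub hu⟩ ⟨c, hCcrib hcC⟩ := hcu.symm
      have e2 : (G.induce (crib G S K)).Adj ⟨c', hCcrib hc'C⟩ ⟨v, hKS_sub hv⟩ := hc'v
      have mid : (G.induce (crib G S K)).Reachable ⟨c, hCcrib hcC⟩ ⟨c', hCcrib hc'C⟩ :=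
        reachable_induce_mono hCcrib (hC.1.preconnected ⟨c, hcC⟩ ⟨c', hc'C⟩)
      exact (SimpleGraph.Adj.reachable e1).trans (mid.trans (SimpleGraph.Adj.reachable e2))
  have hconn : SetConnected G (crib G S K) := by
    rw [SetConnected, SimpleGraph.connected_iff]
    refine ⟨?_, ⟨⟨k0, hk0crib⟩⟩⟩
    rintro ⟨x, hx⟩ ⟨y, hy⟩
    obtain ⟨u, hu, hxu⟩ := reach_base x hx
    obtain ⟨v, hv, hyv⟩ := reach_base y hy
    exact hxu.trans ((base_reach u v hu hv).trans hyv.symm)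
  have hcribComp : IsCompAssoc G S (crib G S K) := ⟨hconn, hdisj, hnbhd⟩
  refine ⟨hcribComp, ⟨k0, hk0crib, hk0K⟩, ?_⟩
  intro C hC ⟨c, hcC, hcK⟩
  have hcS : c ∉ S := Set.disjoint_left.mp hC.2.1 hcC
  have hccrib : c ∈ crib G S K := hKS_sub ⟨hcK, hcS⟩
  exact Set.Subset.antisymm (compAssoc_subset hcribComp hC hccrib hcC)
    (compAssoc_subset hC hcribComp hcC hccrib)

end TW
end

section
/- Let C ⊆ V(G) be a connected set that is inbound. Then N(C) is a minimal separator of G. -/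
namespace TW

variable {V : Type} [Finite V]

/-- If a connected set `C` is inbound, then `N(C)` is a minimal separator of `G`. -/
theorem inbound_minimal_separator {V : Type} [Finite V] [LinearOrder V] (G : SimpleGraph V)
    (hG : G.Connected) (C : Set V) (hC : Inbound G C) :
    MinimalSeparator G (nbhd G C) := by
  obtain ⟨hconn, A, hA, hprec⟩ := hC
  refine ⟨C, A, ⟨⟨hconn, ?_, le_refl _⟩, rfl⟩, hA, ?_⟩
  · rw [Set.disjoint_right]
    intro v hv
    exact hv.1
  · rintro rfl
    obtain ⟨h1, h2, hlt⟩ := hprec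
    exact lt_irrefl _ hlt

end TW
end

section
/- Let K ⊆ V(G) be a cliquish vertex set and let A_1 and A_2 be two components associated with K. If A_1 and A_2 are both outbound, then either N(A_1) ⊆ N(A_2) or N(A_2) ⊆ N(A_1). -/
namespace TW

variable {V : Type} [Finite V]

section AuxProof

variable {G : SimpleGraph V}

/-- If `B` has all its neighbors in `S` and `A` is disjoint from `S`, then membership in `B`
propagates along walks in `G.induce A`. -/
lemma mem_of_walk_aux {A B S : Set V} (hB : nbhd G B ⊆ S) (hA : Disjoint A S) :
    ∀ {a b : ↥A} (_ : (G.induce A).Walk a b), a.val ∈ B → b.val ∈ B := by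
  intro a b w
  induction w with
  | nil => exact id
  | @cons a c b hadj w ih =>
    intro ha
    apply ih
    by_contra hc
    have hmem : c.val ∈ nbhd G B := ⟨hc, a.val, ha, hadj⟩
    exact Set.disjoint_left.mp hA c.property (hB hmem)

lemma mem_of_reachable_aux {A B S : Set V} (hB : nbhd G B ⊆ S) (hA : Disjoint A S)
    {a b : ↥A} (h : (G.induce A).Reachable a b) (ha : a.val ∈ B) : b.val ∈ B := by
  obtain ⟨w⟩ := h
  exact mem_of_walk_aux hB hA w ha

/-- The key construction: if `K` is cliquish, `A₁`, `A₂` are components associated with `K`,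
and some vertex `v` lies in `N(A₂)` but not in `N(A₁)`, then the connected component of
`G - N(A₁)` containing `A₂` is a full component associated with `N(A₁)`. -/
lemma exists_fullcomp_aux {K A₁ A₂ : Set V} (hK : Cliquish G K)
    (h1 : IsCompAssoc G K A₁) (h2 : IsCompAssoc G K A₂)
    {v : V} (hv2 : v ∈ nbhd G A₂) (hv1 : v ∉ nbhd G A₁) :
    ∃ D, IsFullComp G (nbhd G A₁) D ∧ A₂ ⊆ D := by
  set S : Set V := nbhd G A₁ with hS
  have hSK : S ⊆ K := h1.2.2
  have hA₂S : Disjoint A₂ S := Set.disjoint_left.mpr fun a ha has =>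
    Set.disjoint_left.mp h2.2.1 ha (hSK has)
  -- pick a base point in A₂
  obtain ⟨⟨x₂, hx₂⟩⟩ := h2.1.nonempty
  have hx₂c : x₂ ∈ (Sᶜ : Set V) := Set.disjoint_left.mp hA₂S hx₂
  set H : SimpleGraph ↥(Sᶜ : Set V) := G.induce (Sᶜ : Set V) with hH
  set D : Set V :=
    {y | ∃ hy : y ∈ (Sᶜ : Set V), H.Reachable ⟨x₂, hx₂c⟩ ⟨y, hy⟩} with hD
  have hx₂D : x₂ ∈ D := ⟨hx₂c, SimpleGraph.Reachable.refl _⟩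
  -- closure of D under adjacency avoiding S
  have hclose : ∀ {a b : V}, a ∈ D → b ∉ S → G.Adj a b → b ∈ D := by
    rintro a b ⟨ha, hr⟩ hb hadj
    exact ⟨hb, hr.trans (SimpleGraph.Adj.reachable (by exact hadj))⟩
  have hDS : Disjoint D S := Set.disjoint_left.mpr fun y hy => hy.1
  have hnbhd : nbhd G D ⊆ S := by
    rintro w ⟨hwD, u, huD, hadj⟩
    by_contra hwS
    exact hwD (hclose huD hwS hadj)
  have hA₂D : A₂ ⊆ D := fun a ha =>
    mem_of_reachable_aux hnbhd hA₂S (h2.1.preconnected ⟨x₂, hx₂⟩ ⟨a, ha⟩) hx₂D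
  have hvD : v ∈ D := by
    obtain ⟨hvA, a, ha, hadj⟩ := hv2
    exact hclose (hA₂D ha) hv1 hadj
  -- transfer walks in H into walks in `G.induce D`
  have htrans : ∀ {p q : ↥(Sᶜ : Set V)} (_ : H.Walk p q) (hp : p.val ∈ D),
      ∃ hq : q.val ∈ D, (G.induce D).Reachable ⟨p.val, hp⟩ ⟨q.val, hq⟩ := by
    intro p q w
    induction w with
    | nil => exact fun hp => ⟨hp, SimpleGraph.Reachable.refl _⟩
    | @cons p r q hadj w ih =>
      intro hp
      have hadj' : G.Adj p.val r.val := hadj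
      have hrD : r.val ∈ D := hclose hp r.property hadj'
      obtain ⟨hq, hreach⟩ := ih hrD
      refine ⟨hq, SimpleGraph.Reachable.trans ?_ hreach⟩
      exact SimpleGraph.Adj.reachable (by exact hadj')
  have hconn : SetConnected G D := by
    have hne : Nonempty ↥D := ⟨⟨x₂, hx₂D⟩⟩
    refine SimpleGraph.Connected.mk ?_
    rintro ⟨y, hy⟩ ⟨z, hz⟩
    obtain ⟨hy', ry⟩ := hy
    obtain ⟨hz', rz⟩ := hz
    obtain ⟨wy⟩ := ry
    obtain ⟨wz⟩ := rz
    obtain ⟨hyD, Ry⟩ := htrans wy hx₂D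
    obtain ⟨hzD, Rz⟩ := htrans wz hx₂D
    exact Ry.symm.trans Rz
  -- fullness
  have hfull : nbhd G D = S := by
    refine Set.Subset.antisymm hnbhd fun u hu => ?_
    have huD : u ∉ D := Set.disjoint_right.mp hDS hu
    by_cases hu2 : u ∈ nbhd G A₂
    · obtain ⟨_, a, ha, hadj⟩ := hu2
      exact ⟨huD, a, hA₂D ha, hadj⟩
    · have huK : u ∈ K := hSK hu
      have hvK : v ∈ K := h2.2.2 hv2
      have hne : u ≠ v := fun h => hv1 (h ▸ hu)
      rcases hK u huK v hvK hne with hadj | ⟨C, hC, huC, hvC⟩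
      · exact ⟨huD, v, hvD, hadj.symm⟩
      · obtain ⟨hvC', c', hc', hadjc'⟩ := hvC
        have hCS : Disjoint C S := Set.disjoint_left.mpr fun x hx hxs =>
          Set.disjoint_left.mp hC.2.1 hx (hSK hxs)
        have hc'S : c' ∉ S := Set.disjoint_left.mp hCS hc'
        have hc'D : c' ∈ D := hclose hvD hc'S hadjc'.symm
        obtain ⟨huC', c, hc, hadjc⟩ := huC
        have hcD : c ∈ D :=
          mem_of_reachable_aux hnbhd hCS (hC.1.preconnected ⟨c', hc'⟩ ⟨c, hc⟩) hc'D
        exact ⟨huD, c, hcD, hadjc⟩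
  exact ⟨D, ⟨⟨hconn, hDS, hnbhd⟩, hfull⟩, hA₂D⟩

variable [LinearOrder V]

lemma setMin_mem_aux (U : Set V) (h : U.Nonempty) : setMin U h ∈ U :=
  wellFounded_lt.min_mem U h

lemma setMin_le_aux {U : Set V} (h : U.Nonempty) {y : V} (hy : y ∈ U) : setMin U h ≤ y :=
  not_lt.mp (fun hlt => wellFounded_lt.not_lt_min U hy hlt)

end AuxProof

/-- If `K` is cliquish and `A₁`, `A₂` are outbound components associated with `K`, then
either `N(A₁) ⊆ N(A₂)` or `N(A₂) ⊆ N(A₁)`. -/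
theorem outbound_neighborhoods_nested {V : Type} [Finite V] [LinearOrder V]
    (G : SimpleGraph V) (hG : G.Connected) (K A₁ A₂ : Set V) (hK : Cliquish G K)
    (h1 : IsCompAssoc G K A₁) (h2 : IsCompAssoc G K A₂)
    (ho1 : Outbound G A₁) (ho2 : Outbound G A₂) :
    nbhd G A₁ ⊆ nbhd G A₂ ∨ nbhd G A₂ ⊆ nbhd G A₁ := by
  by_contra hcon
  push_neg at hcon
  obtain ⟨h12, h21⟩ := hcon
  obtain ⟨u, hu1, hu2'⟩ := Set.not_subset.mp h12
  obtain ⟨v, hv2, hv1'⟩ := Set.not_subset.mp h21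
  obtain ⟨D₂, hD₂full, hA₂D₂⟩ := exists_fullcomp_aux hK h1 h2 hv2 hv1'
  obtain ⟨D₁, hD₁full, hA₁D₁⟩ := exists_fullcomp_aux hK h2 h1 hu1 hu2'
  -- nonemptiness
  obtain ⟨⟨a₁, ha₁⟩⟩ := h1.1.nonempty
  obtain ⟨⟨a₂, ha₂⟩⟩ := h2.1.nonempty
  have hA₁ne : A₁.Nonempty := ⟨a₁, ha₁⟩
  have hA₂ne : A₂.Nonempty := ⟨a₂, ha₂⟩
  have hD₂ne : D₂.Nonempty := ⟨a₂, hA₂D₂ ha₂⟩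
  have hD₁ne : D₁.Nonempty := ⟨a₁, hA₁D₁ ha₁⟩
  -- outboundness gives min A₁ ≤ min D₂ and min A₂ ≤ min D₁
  have hle1 : setMin A₁ hA₁ne ≤ setMin D₂ hD₂ne := by
    by_contra hlt
    exact ho1.2 ⟨D₂, hD₂full, hD₂ne, hA₁ne, not_le.mp hlt⟩
  have hle2 : setMin A₂ hA₂ne ≤ setMin D₁ hD₁ne := by
    by_contra hlt
    exact ho2.2 ⟨D₁, hD₁full, hD₁ne, hA₂ne, not_le.mp hlt⟩
  have hle3 : setMin D₂ hD₂ne ≤ setMin A₂ hA₂ne :=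
    setMin_le_aux hD₂ne (hA₂D₂ (setMin_mem_aux A₂ hA₂ne))
  have hle4 : setMin D₁ hD₁ne ≤ setMin A₁ hA₁ne :=
    setMin_le_aux hD₁ne (hA₁D₁ (setMin_mem_aux A₁ hA₁ne))
  have heq : setMin A₁ hA₁ne = setMin A₂ hA₂ne :=
    le_antisymm (hle1.trans hle3) (hle2.trans hle4)
  have hmA₁ : setMin A₁ hA₁ne ∈ A₁ := setMin_mem_aux A₁ hA₁ne
  have hmA₂ : setMin A₁ hA₁ne ∈ A₂ := heq ▸ setMin_mem_aux A₂ hA₂ne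
  -- A₁ ⊆ A₂ since they share a vertex
  have hsub : A₁ ⊆ A₂ := fun a ha =>
    mem_of_reachable_aux h2.2.2 h1.2.1 (h1.1.preconnected ⟨_, hmA₁⟩ ⟨a, ha⟩) hmA₂
  obtain ⟨huA₁, a, ha, hadj⟩ := hu1
  have huA₂ : u ∉ A₂ := Set.disjoint_right.mp h2.2.1 (h1.2.2 ⟨huA₁, a, ha, hadj⟩)
  exact hu2' ⟨huA₂, a, hsub ha, hadj⟩

end TW
end

section
/- Let C ⊆ V(G) be a connected set such that N(C) is a minimal separator of G, and let Ω be a potential maximal clique of the graph G⟨C⟩. Then Ω is a potential maximal clique of G. -/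
namespace TW

variable {V : Type} [Finite V]

section PMCAux

open SimpleGraph

variable {W : Type}

namespace TWWalk

lemma edge_getVert_mem {G : SimpleGraph W} {u v : W} (w : G.Walk u v) {i : ℕ}
    (hi : i < w.length) : s(w.getVert i, w.getVert (i+1)) ∈ w.edges := by
  induction w generalizing i with
  | nil => simp at hi
  | cons h p ih =>
    cases i with
    | zero => simp [Walk.getVert_zero, Walk.getVert_cons_succ]
    | succ n =>
      simp only [Walk.getVert_cons_succ, Walk.edges_cons, List.mem_cons]
      right
      exact ih (by simpa [Walk.length_cons, Nat.succ_lt_succ_iff] using hi)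

lemma edge_of_length_one {G : SimpleGraph W} {a b : W} (w : G.Walk a b)
    (h : w.length = 1) : s(a, b) ∈ w.edges := by
  have := edge_getVert_mem w (i := 0) (by omega)
  rwa [Walk.getVert_zero, show w.getVert 1 = b from h ▸ w.getVert_length] at this

lemma exists_getVert_of_mem_edges {G : SimpleGraph W} {u v x y : W} (w : G.Walk u v)
    (h : s(x, y) ∈ w.edges) :
    ∃ i < w.length, (w.getVert i = x ∧ w.getVert (i+1) = y) ∨
      (w.getVert i = y ∧ w.getVert (i+1) = x) := by
  induction w with
  | nil => simp at h
  | cons hadj p ih =>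
    simp only [Walk.edges_cons, List.mem_cons] at h
    rcases h with h | h
    · refine ⟨0, by simp [Walk.length_cons], ?_⟩
      rw [Sym2.eq_iff] at h
      rcases h with ⟨rfl, rfl⟩ | ⟨rfl, rfl⟩
      · left; simp [Walk.getVert_zero, Walk.getVert_cons_succ]
      · right; simp [Walk.getVert_zero, Walk.getVert_cons_succ]
    · obtain ⟨i, hi, hh⟩ := ih h
      exact ⟨i+1, by simpa [Walk.length_cons, Nat.succ_lt_succ_iff] using hi,
        by simpa [Walk.getVert_cons_succ] using hh⟩

lemma support_eq_map_getVert {G : SimpleGraph W} {u v : W} (w : G.Walk u v) :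
    w.support = (List.range (w.length + 1)).map w.getVert := by
  induction w with
  | nil => simp [Walk.getVert]
  | cons h p ih =>
    rw [Walk.support_cons, Walk.length_cons, List.range_succ_eq_map, List.map_cons, ih]
    simp [List.map_map, Function.comp_def, Walk.getVert_cons_succ, Walk.getVert_zero]

lemma support_tail_eq_map_getVert {G : SimpleGraph W} {u v : W} (w : G.Walk u v) :
    w.support.tail = (List.range w.length).map (fun i => w.getVert (i+1)) := by
  rw [support_eq_map_getVert, List.range_succ_eq_map, List.map_cons, List.tail_cons,
    List.map_map]
  rfl

lemma getVert_injOn_of_isCycle {G : SimpleGraph W} {u : W} {w : G.Walk u u}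
    (hw : w.IsCycle) : Set.InjOn w.getVert {i | 1 ≤ i ∧ i ≤ w.length} := by
  have hnd : w.support.tail.Nodup := hw.support_nodup
  rw [support_tail_eq_map_getVert] at hnd
  intro i hi j hj hij
  rcases hi with ⟨hi1, hi2⟩; rcases hj with ⟨hj1, hj2⟩
  have h1 : i - 1 < w.length := by omega
  have h2 : j - 1 < w.length := by omega
  have key := (List.Nodup.getElem_inj_iff hnd
    (i := i - 1) (j := j - 1) (hi := by simpa using h1) (hj := by simpa using h2))
  simp only [List.getElem_map, List.getElem_range] at key
  have : i - 1 = j - 1 := by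
    apply key.mp
    have e1 : i - 1 + 1 = i := by omega
    have e2 : j - 1 + 1 = j := by omega
    rw [e1, e2]; exact hij
  omega

lemma mem_support_tail_of_closed {G : SimpleGraph W} {z : W} (w : G.Walk z z)
    (h1 : 1 ≤ w.length) {x : W} (hx : x ∈ w.support) : x ∈ w.support.tail := by
  rw [Walk.mem_support_iff_exists_getVert] at hx
  obtain ⟨i, hgi, hi⟩ := hx
  rw [support_tail_eq_map_getVert, List.mem_map]
  by_cases h0 : i = 0
  · refine ⟨w.length - 1, List.mem_range.mpr (by omega), ?_⟩
    rw [show w.length - 1 + 1 = w.length by omega, w.getVert_length]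
    rw [h0, w.getVert_zero] at hgi
    exact hgi
  · exact ⟨i - 1, List.mem_range.mpr (by omega),
      by rw [show i - 1 + 1 = i by omega]; exact hgi⟩

/-- Lift a walk whose support lies in `s` to a graph on the subtype `s`. -/
def liftWalk {G : SimpleGraph W} {s : Set W} {H : SimpleGraph ↥s}
    (hup : ∀ (x y : W) (hx : x ∈ s) (hy : y ∈ s), G.Adj x y → H.Adj ⟨x, hx⟩ ⟨y, hy⟩) :
    ∀ {u v : W} (w : G.Walk u v) (hsup : ∀ x ∈ w.support, x ∈ s),
      H.Walk ⟨u, hsup u w.start_mem_support⟩ ⟨v, hsup v w.end_mem_support⟩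
  | _, _, Walk.nil, _ => Walk.nil
  | _, _, Walk.cons h p, hsup =>
      Walk.cons (hup _ _ _ _ h)
        (liftWalk hup p (fun x hx => hsup x (by simp [Walk.support_cons, hx])))

/-- The vertex-inclusion homomorphism. -/
@[reducible]
def homDown {G : SimpleGraph W} {s : Set W} {H : SimpleGraph ↥s}
    (hdn : ∀ a b : ↥s, H.Adj a b → G.Adj a b) : H →g G :=
  ⟨Subtype.val, fun h => hdn _ _ h⟩

lemma liftWalk_map {G : SimpleGraph W} {s : Set W} {H : SimpleGraph ↥s}
    (hup : ∀ (x y : W) (hx : x ∈ s) (hy : y ∈ s), G.Adj x y → H.Adj ⟨x, hx⟩ ⟨y, hy⟩)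
    (hdn : ∀ a b : ↥s, H.Adj a b → G.Adj a b) :
    ∀ {u v : W} (w : G.Walk u v) (hsup : ∀ x ∈ w.support, x ∈ s),
      (liftWalk hup w hsup).map (homDown hdn) = w
  | _, _, Walk.nil, _ => rfl
  | _, _, Walk.cons h p, hsup => by
      simp only [liftWalk, Walk.map_cons]
      congr 1
      exact liftWalk_map hup hdn p _

lemma exists_chordfree_path {H : SimpleGraph W} (X : Set W) {u v : W} (hne : u ≠ v)
    (hnadj : ¬ H.Adj u v) (w₀ : H.Walk u v) (hw₀ : ∀ x ∈ w₀.support, x ∈ X) :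
    ∃ p : H.Walk u v, p.IsPath ∧ (∀ x ∈ p.support, x ∈ X) ∧ 2 ≤ p.length ∧
      ∀ x ∈ p.support, ∀ y ∈ p.support, H.Adj x y → s(x, y) ∈ p.edges := by
  classical
  set P : Set ℕ := {n | ∃ w : H.Walk u v, (∀ x ∈ w.support, x ∈ X) ∧ w.length = n} with hP
  have hPne : w₀.length ∈ P := ⟨w₀, hw₀, rfl⟩
  obtain ⟨w₁, hw₁X, hw₁l⟩ := Nat.sInf_mem ⟨_, hPne⟩
  set p := w₁.bypass with hp
  have hpath : p.IsPath := w₁.bypass_isPath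
  have hpX : ∀ x ∈ p.support, x ∈ X := fun x hx => hw₁X x (w₁.support_bypass_subset hx)
  have hmin : ∀ (w : H.Walk u v), (∀ x ∈ w.support, x ∈ X) → p.length ≤ w.length := by
    intro w hw
    have h1 : p.length ≤ sInf P := hw₁l ▸ w₁.length_bypass_le
    have h2 : sInf P ≤ p.length := Nat.sInf_le ⟨p, hpX, rfl⟩
    have := Nat.sInf_le (show w.length ∈ P from ⟨w, hw, rfl⟩)
    omega
  have hlen2 : 2 ≤ p.length := by
    rcases Nat.lt_or_ge p.length 2 with h | h
    · interval_cases hl : p.length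
      · exact absurd (Walk.eq_of_length_eq_zero hl) hne
      · have := p.adj_getVert_succ (i := 0) (by omega)
        rw [Walk.getVert_zero, show p.getVert 1 = v from hl ▸ p.getVert_length] at this
        exact absurd this hnadj
    · exact h
  refine ⟨p, hpath, hpX, hlen2, ?_⟩
  intro x hx y hy hadj
  by_contra hue
  have hxy : x ≠ y := hadj.ne
  have hsubX : ∀ {w' : H.Walk u v},
      (∀ z ∈ w'.support, z ∈ p.support) → ∀ z ∈ w'.support, z ∈ X :=
    fun h z hz => hpX z (h z hz)
  by_cases hyt : y ∈ (p.takeUntil x hx).support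
  · set q := p.takeUntil x hx with hq
    set D := p.dropUntil x hx with hD
    set r := q.dropUntil y hyt with hr
    have hredge : ∀ e ∈ r.edges, e ∈ p.edges :=
      fun e he => p.edges_takeUntil_subset hx (q.edges_dropUntil_subset hyt he)
    have hr2 : 2 ≤ r.length := by
      rcases Nat.lt_or_ge r.length 2 with h | h
      · interval_cases hl : r.length
        · exact absurd (Walk.eq_of_length_eq_zero hl) (Ne.symm hxy)
        · have := hredge _ (edge_of_length_one r hl)
          rw [Sym2.eq_swap] at this
          exact absurd this hue
      · exact h
    have hql : q.length = (q.takeUntil y hyt).length + r.length := by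
      have := congrArg Walk.length (q.take_spec hyt)
      rw [Walk.length_append] at this; exact this.symm
    have hpl : p.length = q.length + D.length := by
      have := congrArg Walk.length (p.take_spec hx)
      rw [Walk.length_append] at this; exact this.symm
    set w' := (q.takeUntil y hyt).append (Walk.cons hadj.symm D) with hw'
    have hw'X : ∀ z ∈ w'.support, z ∈ X := by
      apply hsubX
      intro z hz
      rw [hw', Walk.mem_support_append_iff] at hz
      rcases hz with hz | hz
      · exact p.support_takeUntil_subset hx (q.support_takeUntil_subset hyt hz)
      · rw [Walk.support_cons, List.mem_cons] at hz
        rcases hz with rfl | hz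
        · exact hy
        · exact p.support_dropUntil_subset hx hz
    have := hmin w' hw'X
    rw [hw', Walk.length_append, Walk.length_cons] at this
    omega
  · have hyD : y ∈ (p.dropUntil x hx).support := by
      have hy' := hy
      rw [← p.take_spec hx, Walk.mem_support_append_iff] at hy'
      exact hy'.resolve_left hyt
    set q := p.takeUntil x hx with hq
    set R := p.dropUntil x hx with hR
    set r := R.takeUntil y hyD with hr
    have hredge : ∀ e ∈ r.edges, e ∈ p.edges :=
      fun e he => p.edges_dropUntil_subset hx (R.edges_takeUntil_subset hyD he)
    have hr2 : 2 ≤ r.length := by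
      rcases Nat.lt_or_ge r.length 2 with h | h
      · interval_cases hl : r.length
        · exact absurd (Walk.eq_of_length_eq_zero hl) hxy
        · exact absurd (hredge _ (edge_of_length_one r hl)) hue
      · exact h
    have hRl : R.length = r.length + (R.dropUntil y hyD).length := by
      have := congrArg Walk.length (R.take_spec hyD)
      rw [Walk.length_append] at this; exact this.symm
    have hpl : p.length = q.length + R.length := by
      have := congrArg Walk.length (p.take_spec hx)
      rw [Walk.length_append] at this; exact this.symm
    set w' := q.append (Walk.cons hadj (R.dropUntil y hyD)) with hw'
    have hw'X : ∀ z ∈ w'.support, z ∈ X := by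
      apply hsubX
      intro z hz
      rw [hw', Walk.mem_support_append_iff] at hz
      rcases hz with hz | hz
      · exact p.support_takeUntil_subset hx hz
      · rw [Walk.support_cons, List.mem_cons] at hz
        rcases hz with rfl | hz
        · exact hx
        · exact p.support_dropUntil_subset hx (R.support_dropUntil_subset hyD hz)
    have := hmin w' hw'X
    rw [hw', Walk.length_append, Walk.length_cons] at this
    omega

end TWWalk

end PMCAux

section PMCAux2

open SimpleGraph TWWalk

/-- An induced subgraph of a chordal graph is chordal. -/
lemma isChordal_induce {W : Type} {G : SimpleGraph W} (hH : IsChordal G) (s : Set W) :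
    IsChordal (G.induce s) := by
  intro v p hp hchord
  set f : G.induce s →g G := homDown (fun a b h => h) with hf
  have hinj : Function.Injective f := Subtype.val_injective
  have hcyc : (p.map f).IsCycle := (Walk.map_isCycle_iff_of_injective hinj).mpr hp
  have h3 : (p.map f).length = 3 := by
    apply hH _ hcyc
    intro x hx y hy hxy
    rw [Walk.support_map, List.mem_map] at hx hy
    obtain ⟨a, ha, rfl⟩ := hx
    obtain ⟨b, hb, rfl⟩ := hy
    have : s(a, b) ∈ p.edges := hchord a ha b hb hxy
    rw [Walk.edges_map, List.mem_map]
    exact ⟨s(a, b), this, by simp [hf, homDown]⟩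
  simpa using h3

/-- A chord-free cycle whose support lies in `s`, where the induced graph on `s`
is chordal, has length three. -/
lemma length_eq_three_of_support_subset {W : Type} {G : SimpleGraph W} {s : Set W}
    (hch : IsChordal (G.induce s)) {z : W}
    (w : G.Walk z z) (hcyc : w.IsCycle) (hsub : ∀ x ∈ w.support, x ∈ s)
    (hchord : ∀ x ∈ w.support, ∀ y ∈ w.support, G.Adj x y → s(x, y) ∈ w.edges) :
    w.length = 3 := by
  have hup : ∀ (x y : W) (hx : x ∈ s) (hy : y ∈ s), G.Adj x y →
      (G.induce s).Adj ⟨x, hx⟩ ⟨y, hy⟩ := fun x y hx hy h => h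
  have hdn : ∀ a b : ↥s, (G.induce s).Adj a b → G.Adj a b := fun a b h => h
  set w' := liftWalk hup w hsub with hw'
  have hmap : w'.map (homDown hdn) = w := liftWalk_map hup hdn w hsub
  have hinj : Function.Injective (homDown (G := G) hdn) := Subtype.val_injective
  have hcyc' : w'.IsCycle := by
    rw [← Walk.map_isCycle_iff_of_injective hinj, hmap]; exact hcyc
  have h3 : w'.length = 3 := by
    apply hch _ hcyc'
    intro a ha b hb hab
    have hav : (a : W) ∈ w.support := by
      rw [← hmap, Walk.support_map]; exact List.mem_map_of_mem ha
    have hbv : (b : W) ∈ w.support := by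
      rw [← hmap, Walk.support_map]; exact List.mem_map_of_mem hb
    have he : s((a : W), (b : W)) ∈ w.edges := hchord _ hav _ hbv (hdn a b hab)
    rw [← hmap, Walk.edges_map, List.mem_map] at he
    obtain ⟨e, he, heq⟩ := he
    induction e with
    | _ x y =>
      simp only [Sym2.map_pair_eq, Sym2.eq_iff] at heq
      rcases heq with ⟨h1, h2⟩ | ⟨h1, h2⟩
      · rwa [show a = x from Subtype.ext h1.symm, show b = y from Subtype.ext h2.symm]
      · rw [show a = y from Subtype.ext h2.symm, show b = x from Subtype.ext h1.symm,
          Sym2.eq_swap]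
        exact he
  rw [← hmap, Walk.length_map, h3]

/-- A walk in an induced connected set stays inside a set `A` whose neighborhood
avoids the connected set. -/
lemma walk_stays {G : SimpleGraph V} {A S C : Set V} (hCS : Disjoint C S)
    (hA : nbhd G A ⊆ S) :
    ∀ {a b : ↥C} (_ : (G.induce C).Walk a b), (a : V) ∈ A → (b : V) ∈ A := by
  intro a b p
  induction p with
  | nil => exact id
  | @cons a c b h p ih =>
    intro ha
    apply ih
    by_contra hcA
    have hmem : (c : V) ∈ nbhd G A := ⟨hcA, a, ha, h⟩
    exact Set.disjoint_left.mp hCS c.2 (hA hmem)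

lemma setConnected_subset {G : SimpleGraph V} {A S C : Set V}
    (hC : SetConnected G C) (hCS : Disjoint C S) (hA : nbhd G A ⊆ S)
    {c₀ : V} (hc₀C : c₀ ∈ C) (hc₀A : c₀ ∈ A) : C ⊆ A := by
  intro c hc
  obtain ⟨p⟩ := hC.preconnected ⟨c₀, hc₀C⟩ ⟨c, hc⟩
  exact walk_stays hCS hA p hc₀A

/-- Between two vertices of `N(C)` there is a `G`-walk whose interior lies in `C`. -/
lemma exists_walk_interior {G : SimpleGraph V} {C : Set V} (hC : SetConnected G C)
    {u v : V} (hu : u ∈ nbhd G C) (hv : v ∈ nbhd G C) :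
    ∃ w : G.Walk u v, ∀ x ∈ w.support, x ∈ insert u (insert v C) := by
  obtain ⟨huC, c₁, hc₁, hadj₁⟩ := hu
  obtain ⟨hvC, c₂, hc₂, hadj₂⟩ := hv
  obtain ⟨p⟩ := hC.preconnected ⟨c₁, hc₁⟩ ⟨c₂, hc₂⟩
  set f : G.induce C →g G := TWWalk.homDown (fun a b h => h) with hf
  set q : G.Walk c₁ c₂ := p.map f with hq
  have hqsup : ∀ x ∈ q.support, x ∈ C := by
    intro x hx
    have hx : x ∈ (p.map f).support := hx
    rw [Walk.support_map, List.mem_map] at hx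
    obtain ⟨a, _, rfl⟩ := hx
    exact a.2
  refine ⟨Walk.cons hadj₁.symm (q.append (Walk.cons hadj₂ Walk.nil)), ?_⟩
  intro x hx
  rw [Walk.support_cons, List.mem_cons] at hx
  rcases hx with rfl | hx
  · exact Set.mem_insert _ _
  rw [Walk.mem_support_append_iff] at hx
  rcases hx with hx | hx
  · exact Set.mem_insert_of_mem _ (Set.mem_insert_of_mem _ (hqsup x hx))
  · rw [Walk.support_cons, List.mem_cons] at hx
    rcases hx with rfl | hx
    · exact Set.mem_insert_of_mem _ (Set.mem_insert_of_mem _ hc₂)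
    · rw [Walk.support_nil, List.mem_singleton] at hx
      exact hx ▸ Set.mem_insert_of_mem _ (Set.mem_insert _ _)

end PMCAux2

/-- If `C` is a connected set such that `N(C)` is a minimal separator of `G`, then every
potential maximal clique of `G⟨C⟩` is a potential maximal clique of `G`. -/
theorem pmc_of_gAngle_pmc {V : Type} [Finite V] (G : SimpleGraph V) (hG : G.Connected)
    (C : Set V) (hC : SetConnected G C) (hmin : MinimalSeparator G (nbhd G C))
    (Ω : Set ↥(nbhdClosed G C)) (hΩ : PMC (gAngle G C) Ω) :
    PMC G (Subtype.val '' Ω) := by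
  classical
  open SimpleGraph TWWalk in
  set S : Set V := nbhd G C with hSdef
  set NC : Set V := nbhdClosed G C with hNCdef
  obtain ⟨H₁, ⟨hle₁, hch₁, hmin₁⟩, hH₁Ω⟩ := hΩ
  have hCNC : C ⊆ NC := Set.subset_union_left
  have hSNC : S ⊆ NC := Set.subset_union_right
  have hSnotC : ∀ x ∈ S, x ∉ C := fun x hx => hx.1
  have hNCcases : ∀ x ∈ NC, x ∈ C ∨ x ∈ S := fun x hx => hx
  set Hbig : SimpleGraph V :=
    H₁.map (Function.Embedding.subtype _) ⊔ G ⊔ cliqueOn (Cᶜ : Set V) with hHbig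
  have hGbig : G ≤ Hbig := le_sup_of_le_left le_sup_right
  have hdown : ∀ a b : ↥NC, H₁.Adj a b → Hbig.Adj ↑a ↑b := by
    intro a b h
    exact Or.inl (Or.inl ((SimpleGraph.map_adj _ _ _ _).mpr ⟨a, b, h, rfl, rfl⟩))
  have hSclq₁ : ∀ (u v : V) (hu : u ∈ S) (hv : v ∈ S), u ≠ v →
      H₁.Adj ⟨u, hSNC hu⟩ ⟨v, hSNC hv⟩ := by
    intro u v hu hv hne
    exact hle₁ (show (G ⊔ cliqueOn (nbhd G C)).Adj u v from Or.inr ⟨hne, hu, hv⟩)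
  have hup : ∀ (x y : V) (hx : x ∈ NC) (hy : y ∈ NC), Hbig.Adj x y →
      H₁.Adj ⟨x, hx⟩ ⟨y, hy⟩ := by
    intro x y hx hy h
    rcases h with (h | h) | h
    · obtain ⟨a, b, hab, ha, hb⟩ := (SimpleGraph.map_adj _ _ _ _).mp h
      have ha' : a = ⟨x, hx⟩ := Subtype.ext ha
      have hb' : b = ⟨y, hy⟩ := Subtype.ext hb
      rwa [ha', hb'] at hab
    · exact hle₁ (show (G ⊔ cliqueOn (nbhd G C)).Adj x y from Or.inl h)
    · obtain ⟨hne, hxC, hyC⟩ := h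
      have hxS : x ∈ S := (hNCcases x hx).resolve_left hxC
      have hyS : y ∈ S := (hNCcases y hy).resolve_left hyC
      exact hSclq₁ x y hxS hyS hne
  have hCedge : ∀ x y : V, Hbig.Adj x y → x ∈ C → y ∈ NC := by
    intro x y h hxC
    rcases h with (h | h) | h
    · obtain ⟨a, b, hab, ha, hb⟩ := (SimpleGraph.map_adj _ _ _ _).mp h
      exact hb ▸ b.2
    · rcases Classical.em (y ∈ C) with h' | h'
      · exact hCNC h'
      · exact hSNC ⟨h', x, hxC, h⟩
    · exact absurd hxC h.2.1
  have hbig_induce : Hbig.induce NC = H₁ := by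
    ext ⟨a, ha⟩ ⟨b, hb⟩
    exact ⟨fun h => hup a b ha hb h, fun h => hdown ⟨a, ha⟩ ⟨b, hb⟩ h⟩
  have hch_ind : IsChordal (Hbig.induce NC) := by rw [hbig_induce]; exact hch₁
  have hchbig : IsChordal Hbig := by
    intro z w hcyc hchord
    by_cases hCsup : ∃ c ∈ w.support, c ∈ C
    · -- all support vertices lie in NC
      have hallNC : ∀ x ∈ w.support, x ∈ NC := by
        by_contra hout
        push_neg at hout
        obtain ⟨x, hxsup, hxNC⟩ := hout
        set w' := w.rotate x hxsup with hw'
        have hcyc' : w'.IsCycle := hcyc.rotate _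
        have hlen' : w'.length = w.length := by
          have h1 := (w.rotate_edges x hxsup).perm.length_eq
          rwa [Walk.length_edges, Walk.length_edges] at h1
        have hlen3 : 3 ≤ w.length := hcyc.three_le_length
        have hsup_iff : ∀ y, y ∈ w'.support ↔ y ∈ w.support := by
          intro y
          constructor
          · intro hy
            have h1 : y ∈ w'.support.tail :=
              mem_support_tail_of_closed w' (by omega) hy
            have h2 : y ∈ w.support.tail := (w.support_rotate x hxsup).mem_iff.mp h1
            rw [w.support_eq_cons]
            exact List.mem_cons_of_mem _ h2
          · intro hy
            have h1 : y ∈ w.support.tail :=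
              mem_support_tail_of_closed w (by omega) hy
            have h2 : y ∈ w'.support.tail := (w.support_rotate x hxsup).mem_iff.mpr h1
            rw [w'.support_eq_cons]
            exact List.mem_cons_of_mem _ h2
        have hedge_iff : ∀ e, e ∈ w'.edges ↔ e ∈ w.edges :=
          fun e => (w.rotate_edges x hxsup).mem_iff
        have hchord' : ∀ a ∈ w'.support, ∀ b ∈ w'.support, Hbig.Adj a b →
            s(a, b) ∈ w'.edges := by
          intro a ha b hb hab
          rw [hedge_iff]
          exact hchord a ((hsup_iff a).mp ha) b ((hsup_iff b).mp hb) hab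
        obtain ⟨c, hcsup, hcC⟩ := hCsup
        have hcsup' : c ∈ w'.support := (hsup_iff c).mpr hcsup
        set n := w'.length with hn
        have hn3 : 3 ≤ n := by omega
        have hinj' := getVert_injOn_of_isCycle hcyc'
        set I : Set ℕ := {i | i ≤ n ∧ w'.getVert i ∈ C} with hI
        have hIne : I.Nonempty := by
          rw [Walk.mem_support_iff_exists_getVert] at hcsup'
          obtain ⟨i, hgi, hile⟩ := hcsup'
          exact ⟨i, hile, hgi ▸ hcC⟩
        have hIbdd : BddAbove I := ⟨n, fun i hi => hi.1⟩
        set a := sInf I with ha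
        set b := sSup I with hb
        have haI : a ∈ I := Nat.sInf_mem hIne
        have hbI : b ∈ I := Nat.sSup_mem hIne hIbdd
        have hab : a ≤ b := Nat.sInf_le hbI
        have hg0 : w'.getVert 0 = x := w'.getVert_zero
        have hgn : w'.getVert n = x := w'.getVert_length
        have hxC : x ∉ C := fun h => hxNC (hCNC h)
        have ha1 : 1 ≤ a := by
          by_contra h
          have h0 : a = 0 := by omega
          have := haI.2
          rw [h0, hg0] at this
          exact hxC this
        have hbn : b + 1 ≤ n := by
          have hble : b ≤ n := hbI.1
          rcases eq_or_lt_of_le hble with h | h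
          · exfalso
            have := hbI.2
            rw [h, hgn] at this
            exact hxC this
          · omega
        have hnotC_am1 : w'.getVert (a - 1) ∉ C := by
          intro h
          have hIm : a - 1 ∈ I := ⟨by omega, h⟩
          have := Nat.sInf_le hIm
          omega
        have hadj_s : Hbig.Adj (w'.getVert (a - 1)) (w'.getVert a) := by
          have := w'.adj_getVert_succ (i := a - 1) (by omega)
          rwa [show a - 1 + 1 = a by omega] at this
        have hsNC : w'.getVert (a - 1) ∈ NC := hCedge _ _ hadj_s.symm haI.2
        have hsS : w'.getVert (a - 1) ∈ S := (hNCcases _ hsNC).resolve_left hnotC_am1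
        have ha2 : 2 ≤ a := by
          by_contra h
          have h0 : a - 1 = 0 := by omega
          rw [h0, hg0] at hsNC
          exact hxNC hsNC
        have hnotC_b1 : w'.getVert (b + 1) ∉ C := by
          intro h
          have hIm : b + 1 ∈ I := ⟨hbn, h⟩
          have := le_csSup hIbdd hIm
          omega
        have hadj_t : Hbig.Adj (w'.getVert b) (w'.getVert (b + 1)) :=
          w'.adj_getVert_succ (by omega)
        have htNC : w'.getVert (b + 1) ∈ NC := hCedge _ _ hadj_t hbI.2
        have htS : w'.getVert (b + 1) ∈ S := (hNCcases _ htNC).resolve_left hnotC_b1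
        have hbn2 : b + 1 ≤ n - 1 := by
          by_contra h
          have h0 : b + 1 = n := by omega
          rw [h0, hgn] at htNC
          exact hxNC htNC
        have hst : w'.getVert (a - 1) ≠ w'.getVert (b + 1) := by
          intro h
          have := hinj' (show a - 1 ∈ _ from ⟨by omega, by omega⟩)
            (show b + 1 ∈ _ from ⟨by omega, by omega⟩) h
          omega
        have hadj_st : Hbig.Adj (w'.getVert (a - 1)) (w'.getVert (b + 1)) :=
          Or.inr ⟨hst, hSnotC _ hsS, hSnotC _ htS⟩
        have hssup : w'.getVert (a - 1) ∈ w'.support :=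
          Walk.mem_support_iff_exists_getVert.mpr ⟨a - 1, rfl, by omega⟩
        have htsup : w'.getVert (b + 1) ∈ w'.support :=
          Walk.mem_support_iff_exists_getVert.mpr ⟨b + 1, rfl, by omega⟩
        have hedge := hchord' _ hssup _ htsup hadj_st
        obtain ⟨i, hi, hcase⟩ := exists_getVert_of_mem_edges w' hedge
        rcases hcase with ⟨h1, h2⟩ | ⟨h1, h2⟩
        · have hi1 : 1 ≤ i := by
            by_contra h
            have h0 : i = 0 := by omega
            rw [h0, hg0] at h1
            exact hxNC (h1 ▸ hsNC)
          have hieq : i = a - 1 := hinj' (show i ∈ _ from ⟨hi1, by omega⟩)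
            (show a - 1 ∈ _ from ⟨by omega, by omega⟩) h1
          rw [hieq, show a - 1 + 1 = a by omega] at h2
          exact hnotC_b1 (h2 ▸ haI.2)
        · have hi1 : 1 ≤ i := by
            by_contra h
            have h0 : i = 0 := by omega
            rw [h0, hg0] at h1
            exact hxNC (h1 ▸ htNC)
          have hieq : i = b + 1 := hinj' (show i ∈ _ from ⟨hi1, by omega⟩)
            (show b + 1 ∈ _ from ⟨by omega, by omega⟩) h1
          have h2' : w'.getVert (b + 2) = w'.getVert (a - 1) := by
            rw [show b + 2 = i + 1 by omega]
            exact h2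
          have := hinj' (show b + 2 ∈ _ from ⟨by omega, by omega⟩)
            (show a - 1 ∈ _ from ⟨by omega, by omega⟩) h2'
          omega
      exact length_eq_three_of_support_subset hch_ind w hcyc hallNC hchord
    · -- support avoids C entirely; then it lies in the clique on Cᶜ
      push_neg at hCsup
      by_contra hne3
      have hlen3 : 3 ≤ w.length := hcyc.three_le_length
      have hge4 : 4 ≤ w.length := by omega
      have hinj' := getVert_injOn_of_isCycle hcyc
      have hg0 : w.getVert 0 = z := w.getVert_zero
      have hgn : w.getVert w.length = z := w.getVert_length
      have h2sup : w.getVert 2 ∈ w.support :=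
        Walk.mem_support_iff_exists_getVert.mpr ⟨2, rfl, by omega⟩
      have hzsup : z ∈ w.support := w.start_mem_support
      have hne02 : z ≠ w.getVert 2 := by
        intro h
        have h' : w.getVert w.length = w.getVert 2 := by rw [hgn]; exact h
        have := hinj' (show w.length ∈ _ from ⟨by omega, le_refl _⟩)
          (show 2 ∈ _ from ⟨by omega, by omega⟩) h'
        omega
      have hadj02 : Hbig.Adj z (w.getVert 2) :=
        Or.inr ⟨hne02, hCsup z hzsup, hCsup _ h2sup⟩
      obtain ⟨i, hi, hcase⟩ :=
        exists_getVert_of_mem_edges w (hchord z hzsup _ h2sup hadj02)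
      rcases hcase with ⟨h1, h2⟩ | ⟨h1, h2⟩
      · rcases Nat.eq_zero_or_pos i with rfl | hpos
        · have := hinj' (show 1 ∈ _ from ⟨le_refl _, by omega⟩)
            (show 2 ∈ _ from ⟨by omega, by omega⟩) h2
          omega
        · have h' : w.getVert i = w.getVert w.length := by rw [h1, hgn]
          have := hinj' (show i ∈ _ from ⟨hpos, by omega⟩)
            (show w.length ∈ _ from ⟨by omega, le_refl _⟩) h'
          omega
      · have hi1 : i + 1 = w.length := by
          have h' : w.getVert (i + 1) = w.getVert w.length := by rw [h2, hgn]
          exact hinj' (show i + 1 ∈ _ from ⟨by omega, by omega⟩)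
            (show w.length ∈ _ from ⟨by omega, le_refl _⟩) h'
        have h' : w.getVert (w.length - 1) = w.getVert 2 := by
          rw [show w.length - 1 = i by omega, h1]
        have := hinj' (show w.length - 1 ∈ _ from ⟨by omega, by omega⟩)
          (show 2 ∈ _ from ⟨by omega, by omega⟩) h'
        omega
  -- a minimal chordal graph between G and Hbig
  set 𝒮 : Set (SimpleGraph V) := {H | G ≤ H ∧ H ≤ Hbig ∧ IsChordal H} with h𝒮
  obtain ⟨Hm, hHm, hHmml⟩ := (Finite.to_wellFoundedLT (α := SimpleGraph V)).wf.has_min 𝒮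
    ⟨Hbig, hGbig, le_refl _, hchbig⟩
  obtain ⟨hGm, hmBig, hchm⟩ := hHm
  -- choose a full component disjoint from C
  obtain ⟨A, B0, hA, hB0, hAB0⟩ := hmin
  have hCdisjS : Disjoint C S := by
    rw [Set.disjoint_left]
    intro x hxC hxS
    exact hSnotC x hxS hxC
  have hdisjAB : Disjoint A B0 := by
    by_contra hnd
    rw [Set.not_disjoint_iff] at hnd
    obtain ⟨x, hxA, hxB⟩ := hnd
    have h1 : A ⊆ B0 := setConnected_subset hA.1.1 hA.1.2.1 hB0.2.le hxA hxB
    have h2 : B0 ⊆ A := setConnected_subset hB0.1.1 hB0.1.2.1 hA.2.le hxB hxA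
    exact hAB0 (Set.Subset.antisymm h1 h2)
  have hBexists : ∃ B, IsFullComp G S B ∧ Disjoint C B := by
    by_cases h : Disjoint C A
    · exact ⟨A, hA, h⟩
    · rw [Set.not_disjoint_iff] at h
      obtain ⟨x, hxC, hxA⟩ := h
      have hCA : C ⊆ A := setConnected_subset hC hCdisjS hA.2.le hxC hxA
      exact ⟨B0, hB0, Set.disjoint_left.mpr
        (fun y hyC hyB => Set.disjoint_left.mp hdisjAB (hCA hyC) hyB)⟩
  obtain ⟨B, hB, hCB⟩ := hBexists
  have hnoCB : ∀ x y : V, x ∈ C → y ∈ B → ¬ Hm.Adj x y := by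
    intro x y hxC hyB hadj
    have hy : y ∈ NC := hCedge x y (hmBig hadj) hxC
    rcases hNCcases y hy with h' | h'
    · exact Set.disjoint_left.mp hCB h' hyB
    · exact Set.disjoint_left.mp hB.1.2.1 hyB h'
  have hSclqm : ∀ u v : V, u ∈ S → v ∈ S → u ≠ v → Hm.Adj u v := by
    intro u v hu hv hne
    by_contra hnadj
    obtain ⟨wC0, hwC0⟩ := exists_walk_interior hC hu hv
    have huB : u ∈ nbhd G B := hB.2.symm ▸ hu
    have hvB : v ∈ nbhd G B := hB.2.symm ▸ hv
    obtain ⟨wB0, hwB0⟩ := exists_walk_interior hB.1.1 huB hvB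
    have htr : ∀ (w : G.Walk u v), ∀ e ∈ w.edges, e ∈ Hm.edgeSet :=
      fun w e he => SimpleGraph.edgeSet_mono hGm (w.edges_subset_edgeSet he)
    obtain ⟨P₁, hP₁path, hP₁X, hP₁len, hP₁chord⟩ :=
      exists_chordfree_path (insert u (insert v C)) hne hnadj
        (wC0.transfer Hm (htr wC0))
        (by rw [Walk.support_transfer]; exact hwC0)
    obtain ⟨P₂, hP₂path, hP₂X, hP₂len, hP₂chord⟩ :=
      exists_chordfree_path (insert u (insert v B)) hne hnadj
        (wB0.transfer Hm (htr wB0))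
        (by rw [Walk.support_transfer]; exact hwB0)
    have hsupCap : ∀ z, z ∈ P₁.support → z ∈ P₂.support → z = u ∨ z = v := by
      intro z h1 h2
      rcases hP₁X z h1 with rfl | hz1
      · exact Or.inl rfl
      rcases hz1 with rfl | hz1
      · exact Or.inr rfl
      rcases hP₂X z h2 with rfl | hz2
      · exact Or.inl rfl
      rcases hz2 with rfl | hz2
      · exact Or.inr rfl
      · exact absurd hz2 (Set.disjoint_left.mp hCB hz1)
    have hedgedisj : ∀ e, e ∈ P₁.edges → e ∈ P₂.edges → False := by
      intro e h1 h2
      induction e with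
      | _ a0 b0 =>
        have ha0 : a0 ∈ P₁.support := P₁.fst_mem_support_of_mem_edges h1
        have hb0 : b0 ∈ P₁.support := P₁.snd_mem_support_of_mem_edges h1
        have ha0' : a0 ∈ P₂.support := P₂.fst_mem_support_of_mem_edges h2
        have hb0' : b0 ∈ P₂.support := P₂.snd_mem_support_of_mem_edges h2
        have hadj := P₁.adj_of_mem_edges h1
        rcases hsupCap a0 ha0 ha0' with rfl | rfl <;>
          rcases hsupCap b0 hb0 hb0' with rfl | rfl
        · exact hadj.ne rfl
        · exact hnadj hadj
        · exact hnadj hadj.symm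
        · exact hadj.ne rfl
    set cyc := P₁.append P₂.reverse with hcycdef
    have hcyccyc : cyc.IsCycle := by
      refine ⟨⟨⟨?_⟩, ?_⟩, ?_⟩
      · rw [hcycdef, Walk.edges_append, Walk.edges_reverse]
        refine List.Nodup.append hP₁path.isTrail.edges_nodup
          (List.nodup_reverse.mpr hP₂path.isTrail.edges_nodup) ?_
        intro e he1 he2
        exact hedgedisj e he1 (List.mem_reverse.mp he2)
      · intro h
        have := congrArg Walk.length h
        rw [hcycdef, Walk.length_append, Walk.length_reverse] at this
        simp only [Walk.length_nil] at this
        omega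
      · rw [hcycdef, Walk.support_append,
          List.tail_append_of_ne_nil (Walk.support_ne_nil _)]
        refine List.Nodup.append hP₁path.support_nodup.tail
          hP₂path.reverse.support_nodup.tail ?_
        intro y hy1 hy2
        have hy1' : y ∈ P₁.support := by
          rw [P₁.support_eq_cons]
          exact List.mem_cons_of_mem _ hy1
        have hy2' : y ∈ P₂.support := by
          have h' : y ∈ P₂.reverse.support := by
            rw [P₂.reverse.support_eq_cons]
            exact List.mem_cons_of_mem _ hy2
          rwa [Walk.support_reverse, List.mem_reverse] at h'
        rcases hsupCap y hy1' hy2' with rfl | rfl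
        · have hnd := hP₁path.support_nodup
          rw [P₁.support_eq_cons] at hnd
          exact (List.nodup_cons.mp hnd).1 hy1
        · have hnd := hP₂path.reverse.support_nodup
          rw [P₂.reverse.support_eq_cons] at hnd
          exact (List.nodup_cons.mp hnd).1 hy2
    have hcyclen : 4 ≤ cyc.length := by
      rw [hcycdef, Walk.length_append, Walk.length_reverse]
      omega
    have hcycchord : ∀ x ∈ cyc.support, ∀ y ∈ cyc.support, Hm.Adj x y →
        s(x, y) ∈ cyc.edges := by
      intro x hx y hy hadj
      rw [hcycdef, Walk.mem_support_append_iff] at hx hy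
      have hmem2 : ∀ {t : V}, t ∈ P₂.reverse.support → t ∈ P₂.support := by
        intro t h
        rwa [Walk.support_reverse, List.mem_reverse] at h
      have hP1e : ∀ {x y : V}, s(x, y) ∈ P₁.edges → s(x, y) ∈ cyc.edges := by
        intro x y h
        rw [hcycdef, Walk.edges_append]
        exact List.mem_append_left _ h
      have hP2e : ∀ {x y : V}, s(x, y) ∈ P₂.edges → s(x, y) ∈ cyc.edges := by
        intro x y h
        rw [hcycdef, Walk.edges_append, Walk.edges_reverse]
        exact List.mem_append_right _ (List.mem_reverse.mpr h)
      rcases hx with hx | hx <;> rcases hy with hy | hy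
      · exact hP1e (hP₁chord x hx y hy hadj)
      · have hy' := hmem2 hy
        rcases hP₁X x hx with rfl | hx1
        · exact hP2e (hP₂chord _ P₂.start_mem_support _ hy' hadj)
        rcases hx1 with rfl | hx1
        · exact hP2e (hP₂chord _ P₂.end_mem_support _ hy' hadj)
        rcases hP₂X y hy' with rfl | hy1
        · exact hP1e (hP₁chord x hx _ P₁.start_mem_support hadj)
        rcases hy1 with rfl | hy1
        · exact hP1e (hP₁chord x hx _ P₁.end_mem_support hadj)
        · exact absurd hadj (hnoCB x y hx1 hy1)
      · have hx' := hmem2 hx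
        rcases hP₂X x hx' with rfl | hx1
        · exact hP1e (hP₁chord _ P₁.start_mem_support y hy hadj)
        rcases hx1 with rfl | hx1
        · exact hP1e (hP₁chord _ P₁.end_mem_support y hy hadj)
        rcases hP₁X y hy with rfl | hy1
        · exact hP2e (hP₂chord x hx' _ P₂.start_mem_support hadj)
        rcases hy1 with rfl | hy1
        · exact hP2e (hP₂chord x hx' _ P₂.end_mem_support hadj)
        · exact absurd hadj.symm (hnoCB y x hy1 hx1)
      · exact hP2e (hP₂chord x (hmem2 hx) y (hmem2 hy) hadj)
    have h3 := hchm cyc hcyccyc hcycchord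
    omega
  have hIndeq : Hm.induce NC = H₁ := by
    refine hmin₁ (Hm.induce NC) ?_ ?_ (isChordal_induce hchm NC)
    · rintro ⟨a, ha⟩ ⟨b, hb⟩ h
      rcases h with h | h
      · exact hGm h
      · exact hSclqm a b h.2.1 h.2.2 h.1
    · rintro ⟨a, ha⟩ ⟨b, hb⟩ h
      exact hup a b ha hb (hmBig h)
  refine ⟨Hm, ⟨hGm, hchm, ?_⟩, ?_⟩
  · intro H' h1 h2 h3
    have hmem : H' ∈ 𝒮 := ⟨h1, le_trans h2 hmBig, h3⟩
    by_contra hne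
    exact hHmml H' hmem (lt_of_le_of_ne h2 hne)
  · rintro x ⟨a, ha, rfl⟩ y ⟨b, hb, rfl⟩ hxy
    have hab : a ≠ b := fun h => hxy (by rw [h])
    have h' := hH₁Ω ha hb hab
    rw [← hIndeq] at h'
    exact h'


end TW
end

section
/- Let K ⊆ V(G) be a cliquish vertex set, let 𝒞 be a non-empty subset of support(K), and let S = ⋃_{C ∈ 𝒞} N(C). If S is a proper subset of K, then crib(S, K) is outbound. -/
namespace TW

variable {V : Type} [Finite V]

section CribHelpers

set_option linter.unusedSectionVars false

variable {G : SimpleGraph V}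

lemma reachable_mono {s t : Set V} (hst : s ⊆ t) {a b : ↥s}
    (h : (G.induce s).Reachable a b) :
    (G.induce t).Reachable ⟨a.1, hst a.2⟩ ⟨b.1, hst b.2⟩ := by
  let f : G.induce s →g G.induce t := ⟨fun x => ⟨x.1, hst x.2⟩, fun hadj => hadj⟩
  exact h.map f

/-- The component of `G - S'` containing `y`. -/
def compOf (G : SimpleGraph V) (S' : Set V) (y : V) (hy : y ∉ S') : Set V :=
  {z | ∃ hz : z ∉ S', (G.induce (S'ᶜ : Set V)).Reachable ⟨y, hy⟩ ⟨z, hz⟩}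

variable {S' : Set V} {y : V} {hy : y ∉ S'}

lemma self_mem_compOf : y ∈ compOf G S' y hy := ⟨hy, .refl _⟩

lemma compOf_not_mem {z : V} (hz : z ∈ compOf G S' y hy) : z ∉ S' := hz.1

lemma compOf_step {z w : V} (hz : z ∈ compOf G S' y hy) (hadj : G.Adj z w)
    (hw : w ∉ S') : w ∈ compOf G S' y hy := by
  obtain ⟨hz', hr⟩ := hz
  exact ⟨hw, hr.trans (SimpleGraph.Adj.reachable (by exact hadj :
    (G.induce (S'ᶜ : Set V)).Adj ⟨z, hz'⟩ ⟨w, hw⟩))⟩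

lemma compOf_absorb {X : Set V} (hX : SetConnected G X) (hXS : ∀ x ∈ X, x ∉ S')
    {t : V} (ht : t ∈ X) (htc : t ∈ compOf G S' y hy) : X ⊆ compOf G S' y hy := by
  intro z hz
  obtain ⟨ht', hr⟩ := htc
  have hXc : X ⊆ (S'ᶜ : Set V) := fun x hx => hXS x hx
  have h2 : (G.induce X).Reachable ⟨t, ht⟩ ⟨z, hz⟩ := hX.preconnected _ _
  exact ⟨hXS z hz, hr.trans (reachable_mono hXc h2)⟩

lemma compOf_nbhd : nbhd G (compOf G S' y hy) ⊆ S' := by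
  rintro v ⟨hv, u, hu, hadj⟩
  by_contra hvS
  exact hv (compOf_step hu hadj hvS)

lemma compOf_closed {X : Set V} (hXS : ∀ x ∈ X, x ∉ S') (hn : nbhd G X ⊆ S')
    (ht : y ∈ X) : compOf G S' y hy ⊆ X := by
  rintro z ⟨hz, hr⟩
  obtain ⟨w⟩ := hr
  have key : ∀ {a b : ↥(S'ᶜ : Set V)} (_ : (G.induce (S'ᶜ : Set V)).Walk a b),
      a.1 ∈ X → b.1 ∈ X := by
    intro a b w
    induction w with
    | nil => exact id
    | cons h p ih =>
      intro ha
      apply ih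
      rename_i c _
      by_contra hc
      exact (c.2 : c.1 ∉ S') (hn ⟨hc, _, ha, h⟩)
  exact key w ht

lemma compOf_connected : SetConnected G (compOf G S' y hy) := by
  have key : ∀ {a b : ↥(S'ᶜ : Set V)} (_ : (G.induce (S'ᶜ : Set V)).Walk a b)
      (ha : a.1 ∈ compOf G S' y hy), ∃ hb : b.1 ∈ compOf G S' y hy,
      (G.induce (compOf G S' y hy)).Reachable ⟨a.1, ha⟩ ⟨b.1, hb⟩ := by
    intro a b w
    induction w with
    | nil => exact fun ha => ⟨ha, .refl _⟩
    | cons h p ih =>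
      rename_i u c d
      intro ha
      have hc : c.1 ∈ compOf G S' y hy := compOf_step ha h c.2
      obtain ⟨hb, hr⟩ := ih hc
      exact ⟨hb, (SimpleGraph.Adj.reachable (by exact h :
        (G.induce (compOf G S' y hy)).Adj ⟨u.1, ha⟩ ⟨c.1, hc⟩)).trans hr⟩
  haveI : Nonempty ↥(compOf G S' y hy) := ⟨⟨y, self_mem_compOf⟩⟩
  refine ⟨fun a b => ?_⟩
  obtain ⟨av, ha2⟩ := a
  obtain ⟨bv, hb2⟩ := b
  obtain ⟨ha', hra⟩ := ha2
  obtain ⟨hb', hrb⟩ := hb2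
  obtain ⟨wa⟩ := hra
  obtain ⟨wb⟩ := hrb
  obtain ⟨h1, r1⟩ := key wa self_mem_compOf
  obtain ⟨h2, r2⟩ := key wb self_mem_compOf
  exact r1.symm.trans r2

lemma assoc_eq_compOf {X : Set V} (hc : SetConnected G X)
    (hd : ∀ x ∈ X, x ∉ S') (hn : nbhd G X ⊆ S') {t : V} (ht : t ∈ X) :
    X = compOf G S' t (hd t ht) :=
  Set.Subset.antisymm (compOf_absorb hc hd ht self_mem_compOf) (compOf_closed hd hn ht)

lemma compAssoc_disjoint {X Y : Set V}
    (hX : IsCompAssoc G S' X) (hY : IsCompAssoc G S' Y) (hne : X ≠ Y) :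
    ∀ t ∈ X, t ∉ Y := by
  intro t htX htY
  apply hne
  have hdX : ∀ x ∈ X, x ∉ S' := fun x hx => Set.disjoint_left.mp hX.2.1 hx
  have hdY : ∀ x ∈ Y, x ∉ S' := fun x hx => Set.disjoint_left.mp hY.2.1 hx
  rw [assoc_eq_compOf hX.1 hdX hX.2.2 htX, assoc_eq_compOf hY.1 hdY hY.2.2 htY]

lemma full_comp_of_cliquish {K : Set V} (hK : Cliquish G K)
    {T : Set V} (hT : IsCompAssoc G K T) (hS' : nbhd G T = S')
    (hyK : y ∈ K) :
    IsFullComp G S' (compOf G S' y hy) := by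
  subst hS'
  have hS'K : nbhd G T ⊆ K := hT.2.2
  refine ⟨⟨compOf_connected, Set.disjoint_left.mpr fun a ha => compOf_not_mem ha,
    compOf_nbhd⟩, ?_⟩
  apply Set.Subset.antisymm compOf_nbhd
  intro w hwS'
  have hwK := hS'K hwS'
  have hwy : w ≠ y := fun h => hy (h ▸ hwS')
  have hwB : w ∉ compOf G (nbhd G T) y hy := fun h => compOf_not_mem h hwS'
  rcases hK w hwK y hyK hwy with hadj | ⟨D, hD, hwD, hyD⟩
  · exact ⟨hwB, y, self_mem_compOf, hadj.symm⟩
  · have hDS' : ∀ x ∈ D, x ∉ nbhd G T :=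
      fun x hx hxS' => Set.disjoint_left.mp hD.2.1 hx (hS'K hxS')
    obtain ⟨hynD, d, hdD, hady⟩ := hyD
    have hdB : d ∈ compOf G (nbhd G T) y hy :=
      compOf_step self_mem_compOf hady.symm (hDS' d hdD)
    have hDB : D ⊆ compOf G (nbhd G T) y hy := compOf_absorb hD.1 hDS' hdD hdB
    obtain ⟨hwnD, d', hd'D, hadw⟩ := hwD
    exact ⟨hwB, d', hDB hd'D, hadw⟩

end CribHelpers

section MinHelpers

variable [LinearOrder V]

lemma setMin_mem (U : Set V) (hU : U.Nonempty) : setMin U hU ∈ U :=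
  WellFounded.min_mem _ U hU

lemma setMin_le {U : Set V} (hU : U.Nonempty) {x : V} (hx : x ∈ U) : setMin U hU ≤ x :=
  le_of_not_gt (WellFounded.not_lt_min _ U hx)

end MinHelpers


/-- If `K` is cliquish, `𝒞` is a nonempty subset of `support K`, and
`S = ⋃_{C ∈ 𝒞} N(C)` is a proper subset of `K`, then `crib S K` is outbound. -/
theorem crib_outbound {V : Type} [Finite V] [LinearOrder V] (G : SimpleGraph V)
    (hG : G.Connected) (K : Set V) (hK : Cliquish G K) (𝒞 : Set (Set V))
    (h𝒞 : 𝒞 ⊆ support G K) (hne : 𝒞.Nonempty) (S : Set V)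
    (hS : S = ⋃ C ∈ 𝒞, nbhd G C) (hSK : S ⊂ K) :
    Outbound G (crib G S K) := by
  classical
  have hSsubK : S ⊆ K := by
    rw [hS]
    exact Set.iUnion₂_subset fun C hC => ((h𝒞 hC).1).2.2
  obtain ⟨u₀, hu₀K, hu₀S⟩ := Set.exists_of_ssubset hSK
  have hUsub : ∀ D, (IsCompAssoc G K D ∧ ¬ nbhd G D ⊆ S) → D ⊆ crib G S K :=
    fun D hD z hz => Or.inr (Set.mem_biUnion hD hz)
  have hKSsub : ∀ v, v ∈ K → v ∉ S → v ∈ crib G S K := fun v h1 h2 => Or.inl ⟨h1, h2⟩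
  have hmem : ∀ v, v ∈ crib G S K ↔
      (v ∈ K ∧ v ∉ S) ∨ ∃ D, (IsCompAssoc G K D ∧ ¬ nbhd G D ⊆ S) ∧ v ∈ D := by
    intro v
    unfold crib
    simp only [Set.mem_union, Set.mem_diff, Set.mem_iUnion, Set.mem_setOf_eq, exists_prop]
  have hcrbS : ∀ v ∈ crib G S K, v ∉ S := by
    intro v hv
    rcases (hmem v).mp hv with h | ⟨D, hD, hvD⟩
    · exact h.2
    · exact fun hvS => Set.disjoint_left.mp hD.1.2.1 hvD (hSsubK hvS)
  -- connectivity of the crib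
  have hcrbConn : SetConnected G (crib G S K) := by
    have claim1 : ∀ v (hv : v ∈ crib G S K), ∃ u, (u ∈ K ∧ u ∉ S) ∧
        ∃ hu : u ∈ crib G S K, (G.induce (crib G S K)).Reachable ⟨v, hv⟩ ⟨u, hu⟩ := by
      intro v hv
      rcases (hmem v).mp hv with h | ⟨D, hD, hvD⟩
      · exact ⟨v, h, hv, .refl _⟩
      · obtain ⟨u, huD, huS⟩ := Set.not_subset.mp hD.2
        have huK : u ∈ K := hD.1.2.2 huD
        obtain ⟨hunD, d, hdD, hadj⟩ := huD
        have hDsub : D ⊆ crib G S K := hUsub D hD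
        have hr : (G.induce D).Reachable ⟨v, hvD⟩ ⟨d, hdD⟩ := hD.1.1.preconnected _ _
        have hucrb : u ∈ crib G S K := hKSsub u huK huS
        exact ⟨u, ⟨huK, huS⟩, hucrb, (reachable_mono hDsub hr).trans
          (SimpleGraph.Adj.reachable (by exact hadj :
            (G.induce (crib G S K)).Adj ⟨d, hDsub hdD⟩ ⟨u, hucrb⟩))⟩
    have claim2 : ∀ u u' (hu1 : u ∈ K) (hu2 : u ∉ S) (hu1' : u' ∈ K) (hu2' : u' ∉ S),
        (G.induce (crib G S K)).Reachable ⟨u, hKSsub u hu1 hu2⟩ ⟨u', hKSsub u' hu1' hu2'⟩ := by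
      intro u u' hu1 hu2 hu1' hu2'
      by_cases he : u = u'
      · subst he; exact .refl _
      · rcases hK u hu1 u' hu1' he with hadj | ⟨D, hD, hunb, hu'nb⟩
        · exact SimpleGraph.Adj.reachable (by exact hadj)
        · have hDu : ¬ nbhd G D ⊆ S := fun h => hu2 (h hunb)
          have hDsub : D ⊆ crib G S K := hUsub D ⟨hD, hDu⟩
          obtain ⟨hunD, d, hdD, hadj⟩ := hunb
          obtain ⟨hu'nD, d', hd'D, hadj'⟩ := hu'nb
          have hr : (G.induce D).Reachable ⟨d, hdD⟩ ⟨d', hd'D⟩ := hD.1.preconnected _ _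
          refine ((SimpleGraph.Adj.reachable (by exact hadj.symm :
            (G.induce (crib G S K)).Adj ⟨u, hKSsub u hu1 hu2⟩ ⟨d, hDsub hdD⟩)).trans
            (reachable_mono hDsub hr)).trans (SimpleGraph.Adj.reachable (by exact hadj' :
            (G.induce (crib G S K)).Adj ⟨d', hDsub hd'D⟩ ⟨u', hKSsub u' hu1' hu2'⟩))
    haveI : Nonempty ↥(crib G S K) := ⟨⟨u₀, hKSsub u₀ hu₀K hu₀S⟩⟩
    refine ⟨fun a b => ?_⟩
    obtain ⟨av, ha⟩ := a
    obtain ⟨bv, hb⟩ := b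
    obtain ⟨u, hu, hucrb, ra⟩ := claim1 av ha
    obtain ⟨u', hu', hu'crb, rb⟩ := claim1 bv hb
    exact (ra.trans (claim2 u u' hu.1 hu.2 hu'.1 hu'.2)).trans rb.symm
  -- the neighborhood of the crib is S
  have hNcrb : nbhd G (crib G S K) = S := by
    apply Set.Subset.antisymm
    · rintro v ⟨hvcrb, w, hwcrb, hadj⟩
      by_contra hvS
      rcases (hmem w).mp hwcrb with hw | ⟨D, hD, hwD⟩
      · by_cases hvK : v ∈ K
        · exact hvcrb (hKSsub v hvK hvS)
        · have hassoc : IsCompAssoc G K (compOf G K v hvK) :=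
            ⟨compOf_connected, Set.disjoint_left.mpr fun a ha => compOf_not_mem ha,
              compOf_nbhd⟩
          have hwN : w ∈ nbhd G (compOf G K v hvK) :=
            ⟨fun hwc => compOf_not_mem hwc hw.1, v, self_mem_compOf, hadj.symm⟩
          exact hvcrb (hUsub _ ⟨hassoc, fun h => hw.2 (h hwN)⟩ self_mem_compOf)
      · have hvD : v ∉ D := fun h => hvcrb (hUsub D hD h)
        have hvK : v ∈ K := hD.1.2.2 ⟨hvD, w, hwD, hadj⟩
        exact hvcrb (hKSsub v hvK hvS)
    · intro s hsS
      have hsK := hSsubK hsS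
      have hscrb : s ∉ crib G S K := fun h => hcrbS s h hsS
      refine ⟨hscrb, ?_⟩
      have hne' : s ≠ u₀ := fun h => hu₀S (h ▸ hsS)
      rcases hK s hsK u₀ hu₀K hne' with hadj | ⟨D, hD, hsnb, hu₀nb⟩
      · exact ⟨u₀, hKSsub u₀ hu₀K hu₀S, hadj.symm⟩
      · have hDu : ¬ nbhd G D ⊆ S := fun h => hu₀S (h hu₀nb)
        obtain ⟨hsnD, d, hdD, hadj⟩ := hsnb
        exact ⟨d, hUsub D ⟨hD, hDu⟩ hdD, hadj⟩
  have hcrbn : nbhd G (crib G S K) ⊆ S := hNcrb.le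
  refine ⟨hcrbConn, ?_⟩
  rintro ⟨A, hAfull, hAprec⟩
  rw [hNcrb] at hAfull
  -- pick a ≺-minimal full component of S preceding the crib
  obtain ⟨hAne, hcrbne, hAlt⟩ := hAprec
  have hW0ne : ({v | ∃ B, (IsFullComp G S B ∧ SetPrec B (crib G S K)) ∧ v ∈ B} :
      Set V).Nonempty := by
    exact ⟨hAne.choose, A, ⟨hAfull, hAne, hcrbne, hAlt⟩, hAne.choose_spec⟩
  set W0 := {v | ∃ B, (IsFullComp G S B ∧ SetPrec B (crib G S K)) ∧ v ∈ B} with hW0def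
  obtain ⟨B₀, hPB₀, hmB₀⟩ := setMin_mem W0 hW0ne
  have hB₀ne : B₀.Nonempty := ⟨setMin W0 hW0ne, hmB₀⟩
  have hminB₀ : setMin B₀ hB₀ne = setMin W0 hW0ne :=
    le_antisymm (setMin_le hB₀ne hmB₀)
      (setMin_le hW0ne ⟨B₀, hPB₀, setMin_mem B₀ hB₀ne⟩)
  have hB₀full : IsFullComp G S B₀ := hPB₀.1
  have hB₀nb : nbhd G B₀ = S := hB₀full.2
  have hB₀min : ∀ B', IsFullComp G S B' → ¬ SetPrec B' B₀ := by
    rintro B' hB' ⟨hB'ne, hB₀ne', hlt⟩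
    obtain ⟨hB₀ne'', hcrbne', hlt2⟩ := hPB₀.2
    have hmemW0 : setMin B' hB'ne ∈ W0 :=
      ⟨B', ⟨hB', hB'ne, hcrbne', hlt.trans hlt2⟩, setMin_mem B' hB'ne⟩
    have h1 : setMin W0 hW0ne ≤ setMin B' hB'ne := setMin_le hW0ne hmemW0
    exact absurd (hlt.trans_le (le_of_eq hminB₀)) (not_lt.mpr h1)
  have hdisjB₀ : ∀ x ∈ B₀, x ∉ S := fun x hx => Set.disjoint_left.mp hB₀full.1.2.1 hx
  have hB₀necrb : B₀ ≠ crib G S K := by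
    rintro rfl
    obtain ⟨h1, h2, hlt⟩ := hPB₀.2
    exact lt_irrefl _ hlt
  have hB₀crb : ∀ t ∈ B₀, t ∉ crib G S K :=
    compAssoc_disjoint hB₀full.1 ⟨hcrbConn, Set.disjoint_left.mpr hcrbS, hcrbn⟩ hB₀necrb
  have hB₀K : ∀ x ∈ B₀, x ∉ K := by
    intro x hx hxK
    by_cases hxS : x ∈ S
    · exact hdisjB₀ x hx hxS
    · exact hB₀crb x hx (hKSsub x hxK hxS)
  have hB₀assocK : IsCompAssoc G K B₀ :=
    ⟨hB₀full.1.1, Set.disjoint_left.mpr hB₀K, fun v hv => hSsubK (hB₀nb ▸ hv)⟩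
  have hB₀nonfull : nbhd G B₀ ≠ K := by rw [hB₀nb]; exact hSK.ne
  have hB₀out : Outbound G B₀ := by
    refine ⟨hB₀full.1.1, ?_⟩
    rintro ⟨B', hB'full, hp⟩
    rw [hB₀nb] at hB'full
    exact hB₀min B' hB'full hp
  -- the outlet exists
  have hex : ∃ A, IsCompAssoc G K A ∧ nbhd G A ≠ K ∧ Outbound G A ∧
      ∀ A', IsCompAssoc G K A' → nbhd G A' ≠ K → Outbound G A' →
        ¬ nbhd G A ⊂ nbhd G A' := by
    obtain ⟨Am, hAm, hmax⟩ := Set.Finite.exists_maximalFor (fun B => nbhd G B)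
      {B | IsCompAssoc G K B ∧ nbhd G B ≠ K ∧ Outbound G B} (Set.toFinite _)
      ⟨B₀, hB₀assocK, hB₀nonfull, hB₀out⟩
    exact ⟨Am, hAm.1, hAm.2.1, hAm.2.2,
      fun A' h1 h2 h3 hss => hss.ne (Set.Subset.antisymm hss.le (hmax ⟨h1, h2, h3⟩ hss.le))⟩
  have houtlet : outlet G K = nbhd G hex.choose := by
    unfold outlet
    rw [dif_pos hex]
  obtain ⟨hAsassoc, hAsnonfull, hAsout, hAsmax⟩ := hex.choose_spec
  set Astar := hex.choose with hAstardef
  -- pick x ∈ S \ N(Astar)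
  obtain ⟨C₀, hC₀⟩ := hne
  have hnotsub : ¬ nbhd G C₀ ⊆ outlet G K := (h𝒞 hC₀).2
  rw [houtlet] at hnotsub
  obtain ⟨x, hxC₀, hxAs⟩ := Set.not_subset.mp hnotsub
  have hxS : x ∈ S := by rw [hS]; exact Set.mem_biUnion hC₀ hxC₀
  have hxK : x ∈ K := hSsubK hxS
  -- pick y ∈ N(Astar) \ S
  have hnsub : ¬ nbhd G Astar ⊆ S := by
    intro hsub
    refine hAsmax B₀ hB₀assocK hB₀nonfull hB₀out ?_
    rw [hB₀nb]
    exact lt_iff_le_not_ge.mpr ⟨hsub, fun hle => hxAs (hle hxS)⟩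
  obtain ⟨y, hyAs, hyS⟩ := Set.not_subset.mp hnsub
  have hyK : y ∈ K := hAsassoc.2.2 hyAs
  -- B := component of G - S containing y, is full and contains Astar
  have hBfull : IsFullComp G S (compOf G S y hyS) :=
    full_comp_of_cliquish hK hB₀assocK hB₀nb hyK
  have hAsdisjK : ∀ a ∈ Astar, a ∉ K := fun a ha => Set.disjoint_left.mp hAsassoc.2.1 ha
  have hAsS : ∀ a ∈ Astar, a ∉ S := fun a ha haS => hAsdisjK a ha (hSsubK haS)
  obtain ⟨hynAs, a, haAs, haadj⟩ := hyAs
  have haB : a ∈ compOf G S y hyS := compOf_step self_mem_compOf haadj.symm (hAsS a haAs)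
  have hAsB : Astar ⊆ compOf G S y hyS := compOf_absorb hAsassoc.1 hAsS haAs haB
  have hyB₀ : y ∉ B₀ := fun h => hB₀K y h hyK
  have hBB₀ : compOf G S y hyS ≠ B₀ := fun h => hyB₀ (h ▸ self_mem_compOf)
  have hdisjBB₀ := compAssoc_disjoint hBfull.1 hB₀full.1 hBB₀
  have hBne : (compOf G S y hyS).Nonempty := ⟨y, self_mem_compOf⟩
  have hnp : ¬ SetPrec (compOf G S y hyS) B₀ := hB₀min _ hBfull
  have h1 : setMin B₀ hB₀ne < setMin (compOf G S y hyS) hBne := by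
    rcases lt_or_ge (setMin (compOf G S y hyS) hBne) (setMin B₀ hB₀ne) with h | h
    · exact absurd ⟨hBne, hB₀ne, h⟩ hnp
    · exact lt_of_le_of_ne h fun he =>
        hdisjBB₀ _ (setMin_mem _ hBne) (he ▸ setMin_mem B₀ hB₀ne)
  have hAsne : Astar.Nonempty :=
    Set.nonempty_coe_sort.mp (hAsassoc.1 : (G.induce Astar).Connected).nonempty
  have h2 : setMin (compOf G S y hyS) hBne ≤ setMin Astar hAsne :=
    setMin_le hBne (hAsB (setMin_mem _ hAsne))
  -- B' := component of G - N(Astar) containing x, is full and contains B₀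
  have hB'full : IsFullComp G (nbhd G Astar) (compOf G (nbhd G Astar) x hxAs) :=
    full_comp_of_cliquish hK hAsassoc rfl hxK
  have hB₀S₂ : ∀ z ∈ B₀, z ∉ nbhd G Astar := fun z hz hz2 => hB₀K z hz (hAsassoc.2.2 hz2)
  have hxnb : x ∈ nbhd G B₀ := by rw [hB₀nb]; exact hxS
  obtain ⟨hxnB₀, b, hbB₀, hbadj⟩ := hxnb
  have hbB' : b ∈ compOf G (nbhd G Astar) x hxAs :=
    compOf_step self_mem_compOf hbadj.symm (hB₀S₂ b hbB₀)
  have hB₀B' : B₀ ⊆ compOf G (nbhd G Astar) x hxAs :=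
    compOf_absorb hB₀full.1.1 hB₀S₂ hbB₀ hbB'
  have hxnAs : x ∉ Astar := fun h => hAsdisjK x h hxK
  have hB'As : compOf G (nbhd G Astar) x hxAs ≠ Astar := fun h => hxnAs (h ▸ self_mem_compOf)
  have hAsassocS₂ : IsCompAssoc G (nbhd G Astar) Astar :=
    ⟨hAsassoc.1, Set.disjoint_left.mpr fun a ha h2 => h2.1 ha, subset_rfl⟩
  have hdisjB'As := compAssoc_disjoint hB'full.1 hAsassocS₂ hB'As
  have hB'ne : (compOf G (nbhd G Astar) x hxAs).Nonempty := ⟨x, self_mem_compOf⟩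
  have hnp2 : ¬ SetPrec (compOf G (nbhd G Astar) x hxAs) Astar := by
    intro hp
    exact hAsout.2 ⟨_, hB'full, hp⟩
  have h3 : setMin Astar hAsne < setMin (compOf G (nbhd G Astar) x hxAs) hB'ne := by
    rcases lt_or_ge (setMin (compOf G (nbhd G Astar) x hxAs) hB'ne) (setMin Astar hAsne)
      with h | h
    · exact absurd ⟨hB'ne, hAsne, h⟩ hnp2
    · exact lt_of_le_of_ne h fun he =>
        hdisjB'As _ (setMin_mem _ hB'ne) (he ▸ setMin_mem Astar hAsne)
  have h4 : setMin (compOf G (nbhd G Astar) x hxAs) hB'ne ≤ setMin B₀ hB₀ne :=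
    setMin_le hB'ne (hB₀B' (setMin_mem _ hB₀ne))
  exact lt_irrefl _ (((h1.trans_le h2).trans h3).trans_le h4)


end TW
end
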